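/- arXiv:1103.1584 — 9 statements merged into one kernel-verified Lean document; each statement's English description precedes it below -/
import Mathlib

section
/- Let n ≥ 1 and let T = {(z₁,…,zₙ) ∈ (ℂ \ {0})ⁿ : z₁⋯zₙ = 1}. The map sending (z₁,…,zₙ) ∈ T to (σ₁(z),…,σ_{n−1}(z)) ∈ ℂ^{n−1}, where σ₁,…,σ_{n−1} are the elementary symmetric polynomials, is surjective onto ℂ^{n−1}, and two points of T have the same image if and only if they differ by a permutation of the coordinates. -/
open Finset

/-- The `k`-th elementary symmetric polynomial evaluated at `z : Fin n → ℂ`. -/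
noncomputable def esymmVal (n : ℕ) (z : Fin n → ℂ) (k : ℕ) : ℂ :=
  ∑ s ∈ Finset.powersetCard k (Finset.univ : Finset (Fin n)), ∏ i ∈ s, z i

section Aux
open Polynomial

lemma esymmVal_eq_esymm (n : ℕ) (z : Fin n → ℂ) (k : ℕ) :
    esymmVal n z k = (Multiset.map z Finset.univ.val).esymm k :=
  (Finset.esymm_map_val z univ k).symm

lemma esymm_card_eq_prod (s : Multiset ℂ) : s.esymm (Multiset.card s) = s.prod := by
  have h1 : Multiset.powersetCard (Multiset.card s) s = {s} := by
    obtain ⟨a, ha⟩ := Multiset.card_eq_one.mp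
      (show Multiset.card (Multiset.powersetCard (Multiset.card s) s) = 1 by
        simp [Multiset.card_powersetCard])
    have hm : a ∈ Multiset.powersetCard (Multiset.card s) s := by
      rw [ha]; exact Multiset.mem_singleton_self a
    rw [Multiset.mem_powersetCard] at hm
    rw [ha, Multiset.eq_of_le_of_card_le hm.1 hm.2.ge]
  rw [Multiset.esymm, h1]
  simp

lemma esymmVal_card (n : ℕ) (z : Fin n → ℂ) : esymmVal n z n = ∏ i, z i := by
  have h1 : Multiset.card (Multiset.map z Finset.univ.val) = n := by simp
  have h2 := esymm_card_eq_prod (Multiset.map z Finset.univ.val)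
  rw [h1] at h2
  rw [esymmVal_eq_esymm, h2, Finset.prod_eq_multiset_prod]

lemma exists_perm_of_map_univ_eq {n : ℕ} {f g : Fin n → ℂ}
    (h : Multiset.map f Finset.univ.val = Multiset.map g Finset.univ.val) :
    ∃ σ : Equiv.Perm (Fin n), g = f ∘ σ := by
  classical
  have hcard : ∀ a : ℂ, Fintype.card {i // g i = a} = Fintype.card {i // f i = a} := by
    intro a
    have hc := congrArg (Multiset.count a) h
    rw [Multiset.count_map, Multiset.count_map] at hc
    simpa [Fintype.card_subtype, Finset.card, Finset.filter, eq_comm] using hc.symm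
  let e : ∀ a : ℂ, {i // g i = a} ≃ {i // f i = a} := fun a => Fintype.equivOfCardEq (hcard a)
  refine ⟨(Equiv.sigmaFiberEquiv g).symm.trans
    ((Equiv.sigmaCongrRight e).trans (Equiv.sigmaFiberEquiv f)), ?_⟩
  funext i
  have : ((Equiv.sigmaFiberEquiv g).symm.trans
      ((Equiv.sigmaCongrRight e).trans (Equiv.sigmaFiberEquiv f))) i
      = (e (g i) ⟨i, rfl⟩).1 := rfl
  rw [Function.comp_apply, this]
  exact ((e (g i) ⟨i, rfl⟩).2).symm

lemma multiset_eq_of_esymm_eq {s t : Multiset ℂ} (hcs : Multiset.card s = Multiset.card t)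
    (h : ∀ k, s.esymm k = t.esymm k) : s = t := by
  have hp : (s.map fun a => X - C a).prod = (t.map fun a => X - C a).prod := by
    ext k
    by_cases hk : k ≤ Multiset.card s
    · rw [Multiset.prod_X_sub_C_coeff s hk, Multiset.prod_X_sub_C_coeff t (hcs ▸ hk), hcs, h]
    · push_neg at hk
      rw [Polynomial.coeff_eq_zero_of_natDegree_lt, Polynomial.coeff_eq_zero_of_natDegree_lt]
      · rw [Polynomial.natDegree_multiset_prod_X_sub_C_eq_card, ← hcs]; exact hk
      · rw [Polynomial.natDegree_multiset_prod_X_sub_C_eq_card]; exact hk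
  have := congrArg Polynomial.roots hp
  rwa [roots_multiset_prod_X_sub_C, roots_multiset_prod_X_sub_C] at this

lemma exists_roots_aux (n : ℕ) (hn : 1 ≤ n) (e : ℕ → ℂ) (hen : e n = 1) :
    ∃ R : Multiset ℂ, Multiset.card R = n ∧
      (∀ j, 1 ≤ j → j ≤ n → R.esymm j = e j) ∧ R.prod = 1 := by
  classical
  set r : ℂ[X] := ∑ j ∈ Finset.range n, C ((-1) ^ (j + 1) * e (j + 1)) * X ^ (n - (j + 1))
    with hr
  set p : ℂ[X] := X ^ n + r with hp
  have hdegr : r.degree < (n : WithBot ℕ) := by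
    apply lt_of_le_of_lt (Polynomial.degree_sum_le _ _)
    rw [Finset.sup_lt_iff (by exact_mod_cast WithBot.bot_lt_coe n)]
    intro j hj
    apply lt_of_le_of_lt (Polynomial.degree_C_mul_X_pow_le _ _)
    exact_mod_cast Nat.sub_lt_of_pos_le (Nat.succ_pos j) (Finset.mem_range.mp hj)
  have hmonic : p.Monic := Polynomial.monic_X_pow_add hdegr
  have hdeg : p.natDegree = n := by
    have : p.degree = n := by
      rw [hp]
      rw [Polynomial.degree_add_eq_left_of_degree_lt (by rwa [Polynomial.degree_X_pow])]
      exact Polynomial.degree_X_pow n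
    exact Polynomial.natDegree_eq_of_degree_eq_some this
  have hcoeff : ∀ k, k < n → p.coeff k = (-1) ^ (n - k) * e (n - k) := by
    intro k hk
    rw [hp, Polynomial.coeff_add, Polynomial.coeff_X_pow, if_neg hk.ne,
      Polynomial.finset_sum_coeff, zero_add]
    rw [Finset.sum_eq_single (n - 1 - k)]
    · have h1 : n - 1 - k + 1 = n - k := by omega
      have h2 : n - (n - k) = k := by omega
      rw [h1, h2, Polynomial.coeff_C_mul, Polynomial.coeff_X_pow, if_pos rfl, mul_one]
    · intro j hj hne
      have : n - (j + 1) ≠ k := by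
        have := Finset.mem_range.mp hj; omega
      rw [Polynomial.coeff_C_mul, Polynomial.coeff_X_pow, if_neg (fun h => this h.symm),
        mul_zero]
    · intro h
      exact absurd (Finset.mem_range.mpr (by omega)) h
  have hcard : Multiset.card p.roots = n := by
    rw [← hdeg]
    exact Polynomial.splits_iff_card_roots.mp (IsAlgClosed.splits p)
  have hesymm : ∀ j, 1 ≤ j → j ≤ n → p.roots.esymm j = e j := by
    intro j h1 h2
    have hk : n - j < n := by omega
    have := Polynomial.coeff_eq_esymm_roots_of_card (hcard.trans hdeg.symm) (k := n - j)
      (by omega)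
    rw [hmonic.leadingCoeff, one_mul, hdeg] at this
    have hnj : n - (n - j) = j := by omega
    rw [hnj] at this
    rw [hcoeff _ hk, hnj] at this
    exact (mul_left_cancel₀ (pow_ne_zero j (by norm_num : (-1 : ℂ) ≠ 0)) this.symm)
  refine ⟨p.roots, hcard, hesymm, ?_⟩
  have := esymm_card_eq_prod p.roots
  rw [hcard] at this
  rw [← this, hesymm n hn le_rfl, hen]

end Aux

/-- On the maximal torus `T = {z ∈ (ℂ*)ⁿ : z₁⋯zₙ = 1}` of `SL(n,ℂ)`, the map
`z ↦ (σ₁(z),…,σ_{n−1}(z))` given by the elementary symmetric polynomials is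
surjective onto `ℂ^{n−1}`, and two points of `T` have the same image iff they
differ by a permutation of the coordinates. -/
theorem sln_adjoint_quotient (n : ℕ) (hn : 1 ≤ n) :
    (∀ w : Fin (n - 1) → ℂ, ∃ z : Fin n → ℂ, (∀ i, z i ≠ 0) ∧ ∏ i, z i = 1 ∧
      ∀ k : Fin (n - 1), esymmVal n z (k.1 + 1) = w k) ∧
    (∀ z z' : Fin n → ℂ, (∀ i, z i ≠ 0) → ∏ i, z i = 1 →
      (∀ i, z' i ≠ 0) → ∏ i, z' i = 1 →
      ((∀ k : Fin (n - 1), esymmVal n z (k.1 + 1) = esymmVal n z' (k.1 + 1)) ↔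
        ∃ σ : Equiv.Perm (Fin n), z' = z ∘ σ)) := by
  classical
  constructor
  · -- surjectivity
    intro w
    set e : ℕ → ℂ := fun j => if h : j - 1 < n - 1 then w ⟨j - 1, h⟩ else 1 with he
    have hen : e n = 1 := by simp [he]
    obtain ⟨R, hcard, hesymm, hprod⟩ := exists_roots_aux n hn e hen
    -- realize R as a tuple
    set l := R.toList with hl
    have hlen : l.length = n := by rw [hl, Multiset.length_toList, hcard]
    set z : Fin n → ℂ := fun i => l.get (Fin.cast hlen.symm i) with hz
    have hmap : Multiset.map z Finset.univ.val = R := by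
      have h1 : Multiset.map z Finset.univ.val = ↑(List.ofFn z) := by
        simp [Fin.univ_def, List.ofFn_eq_map, Finset.val]
      have h2 : List.ofFn z = l := by
        apply List.ext_get (by simp [hlen])
        intro i hi1 hi2
        simp [hz, List.get_ofFn]
      rw [h1, h2, hl, Multiset.coe_toList]
    have hzprod : ∏ i, z i = 1 := by
      rw [Finset.prod_eq_multiset_prod, hmap, hprod]
    refine ⟨z, ?_, hzprod, ?_⟩
    · intro i hzi
      have : (0 : ℂ) ∈ R := by
        rw [← hmap]
        exact Multiset.mem_map.mpr ⟨i, Finset.mem_univ i, hzi⟩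
      have := Multiset.prod_eq_zero this
      rw [hprod] at this
      exact one_ne_zero this
    · intro k
      have h1 : 1 ≤ k.1 + 1 := le_refl 1 |>.trans (by omega)
      have h2 : k.1 + 1 ≤ n := by omega
      rw [esymmVal_eq_esymm, hmap, hesymm _ h1 h2, he]
      simp
  · -- injectivity up to permutation
    intro z z' hz0 hz1 hz0' hz1'
    constructor
    · intro hk
      have hmeq : Multiset.map z Finset.univ.val = Multiset.map z' Finset.univ.val := by
        apply multiset_eq_of_esymm_eq (by simp)
        intro k
        rcases Nat.eq_zero_or_pos k with rfl | hkpos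
        · simp [Multiset.esymm]
        rcases lt_trichotomy k n with hlt | heq | hgt
        · -- 1 ≤ k ≤ n - 1
          have := hk ⟨k - 1, by omega⟩
          rw [esymmVal_eq_esymm, esymmVal_eq_esymm] at this
          simpa [Nat.sub_add_cancel hkpos] using this
        · have e1 := esymmVal_card n z
          have e2 := esymmVal_card n z'
          rw [esymmVal_eq_esymm] at e1 e2
          rw [heq, e1, e2, hz1, hz1']
        · rw [Multiset.esymm, Multiset.esymm,
            Multiset.powersetCard_eq_empty k (by simpa using hgt),
            Multiset.powersetCard_eq_empty k (by simpa using hgt)]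
      exact exists_perm_of_map_univ_eq hmeq
    · rintro ⟨σ, rfl⟩
      intro k
      rw [esymmVal_eq_esymm, esymmVal_eq_esymm]
      congr 1
      symm
      calc Multiset.map (z ∘ σ) Finset.univ.val
          = Multiset.map z (Multiset.map σ Finset.univ.val) := by
            rw [Multiset.map_map]
        _ = Multiset.map z Finset.univ.val := by rw [Multiset.map_univ_val_equiv]
end

section
/- Let z = x + iy be a nonzero complex number, and set r² = x² + y², X = x + x/r², Y = y − y/r², and τ = y²/r². Then τ ≥ 0 and Y² = (X² + Y² + 4(τ − 1))·τ. -/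
/-- For a nonzero complex number `z = x + iy`, with `r² = x² + y²`,
`X = x + x/r²`, `Y = y − y/r²`, `τ = y²/r²`, one has `τ ≥ 0` and
`Y² = (X² + Y² + 4(τ − 1))·τ` (the defining equation of the "canoe"). -/
theorem canoe_relation (x y : ℝ) (hz : (x : ℂ) + y * Complex.I ≠ 0) :
    let r2 : ℝ := x ^ 2 + y ^ 2
    let X : ℝ := x + x / r2
    let Y : ℝ := y - y / r2
    let τ : ℝ := y ^ 2 / r2
    0 ≤ τ ∧ Y ^ 2 = (X ^ 2 + Y ^ 2 + 4 * (τ - 1)) * τ := by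
  intro r2 X Y τ
  have hxy : x ≠ 0 ∨ y ≠ 0 := by
    by_contra h
    push_neg at h
    exact hz (by simp [h.1, h.2])
  have hr2 : r2 ≠ 0 := by
    have : 0 < r2 := by
      rcases hxy with h | h <;> positivity
    exact this.ne'
  constructor
  · positivity
  · show (y - y / r2) ^ 2 = ((x + x / r2) ^ 2 + (y - y / r2) ^ 2 + 4 * (y ^ 2 / r2 - 1)) * (y ^ 2 / r2)
    field_simp
    ring_nf
    simp only [r2]
    ring
end

section
/- The function g : ℝ² → ℝ defined by g(X,Y) = (1/2)·√(Y² + (X² + Y² − 4)²/16) − (X² + Y² − 4)/8 is not differentiable at the point (2,0), and not differentiable at the point (−2,0). -/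
lemma sqrt_aux_not_diff :
    ¬ DifferentiableAt ℝ (fun t : ℝ => Real.sqrt (t ^ 2 + t ^ 4 / 16)) 0 := by
  intro h
  have hs : DifferentiableAt ℝ (fun t : ℝ => Real.sqrt (1 + t ^ 2 / 16)) 0 := by
    have h1 : DifferentiableAt ℝ (fun t : ℝ => 1 + t ^ 2 / 16) 0 := by fun_prop
    exact h1.sqrt (by norm_num)
  have hne : Real.sqrt (1 + (0 : ℝ) ^ 2 / 16) ≠ 0 :=
    ne_of_gt (Real.sqrt_pos.mpr (by norm_num))
  have hdiv : DifferentiableAt ℝ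
      (fun t : ℝ => Real.sqrt (t ^ 2 + t ^ 4 / 16) / Real.sqrt (1 + t ^ 2 / 16)) 0 :=
    h.div hs hne
  have key : (fun t : ℝ => Real.sqrt (t ^ 2 + t ^ 4 / 16) / Real.sqrt (1 + t ^ 2 / 16))
      = fun t : ℝ => |t| := by
    funext t
    have hpos : (0 : ℝ) < Real.sqrt (1 + t ^ 2 / 16) := Real.sqrt_pos.mpr (by positivity)
    rw [show t ^ 2 + t ^ 4 / 16 = t ^ 2 * (1 + t ^ 2 / 16) by ring,
      Real.sqrt_mul (sq_nonneg t), Real.sqrt_sq_eq_abs,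
      mul_div_assoc, div_self hpos.ne', mul_one]
  rw [key] at hdiv
  exact not_differentiableAt_abs_zero hdiv

/-- The function `g(X,Y) = (1/2)√(Y² + (X² + Y² − 4)²/16) − (X² + Y² − 4)/8`
expressing the invariant `τ` on the reduced phase space of `SU(2)` lattice
gauge theory is not differentiable at the two singular points `(±2, 0)`. -/
theorem tau_not_differentiable_at_singular_points :
    let g : ℝ × ℝ → ℝ := fun p =>
      (1 / 2) * Real.sqrt (p.2 ^ 2 + (p.1 ^ 2 + p.2 ^ 2 - 4) ^ 2 / 16)
        - (p.1 ^ 2 + p.2 ^ 2 - 4) / 8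
    ¬ DifferentiableAt ℝ g ((2 : ℝ), (0 : ℝ)) ∧
    ¬ DifferentiableAt ℝ g ((-2 : ℝ), (0 : ℝ)) := by
  intro g
  have main : ∀ a : ℝ, a ^ 2 = 4 → ¬ DifferentiableAt ℝ g (a, 0) := by
    intro a ha hdiff
    have hc : DifferentiableAt ℝ (fun t : ℝ => ((a : ℝ), t)) 0 := by fun_prop
    have h1 : DifferentiableAt ℝ (fun t : ℝ => g (a, t)) 0 := hdiff.comp 0 hc
    have h2 : (fun t : ℝ => g (a, t))
        = fun t : ℝ => (1 / 2) * Real.sqrt (t ^ 2 + t ^ 4 / 16) - t ^ 2 / 8 := by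
      funext t
      show (1 / 2) * Real.sqrt (t ^ 2 + (a ^ 2 + t ^ 2 - 4) ^ 2 / 16)
          - (a ^ 2 + t ^ 2 - 4) / 8 = _
      rw [ha, show (4 : ℝ) + t ^ 2 - 4 = t ^ 2 by ring, show (t ^ 2) ^ 2 = t ^ 4 by ring]
    rw [h2] at h1
    have h3 : DifferentiableAt ℝ (fun t : ℝ => Real.sqrt (t ^ 2 + t ^ 4 / 16)) 0 := by
      have h4 : DifferentiableAt ℝ
          (fun t : ℝ => 2 * ((1 / 2) * Real.sqrt (t ^ 2 + t ^ 4 / 16) - t ^ 2 / 8)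
            + t ^ 2 / 4) 0 := (h1.const_mul 2).add (by fun_prop)
      convert h4 using 2 with t
      ring
    exact sqrt_aux_not_diff h3
  exact ⟨main 2 (by norm_num), main (-2) (by norm_num)⟩
end

section
/- On the polynomial ring ℝ[X, Y, τ], define a bracket by {f, g} = (X² + Y² + 8τ − 4)·(∂_X f·∂_Y g − ∂_Y f·∂_X g) + 2(1−τ)Y·(∂_X f·∂_τ g − ∂_τ f·∂_X g) + 2τX·(∂_Y f·∂_τ g − ∂_τ f·∂_Y g), so that {X,Y} = X² + Y² + 4(2τ − 1), {X,τ} = 2(1−τ)Y, {Y,τ} = 2τX. Then this bracket satisfies the Jacobi identity for all polynomials, and the polynomial R = Y² − (X² + Y² + 4(τ−1))τ is a Casimir element: {f, R} = 0 for every polynomial f ∈ ℝ[X,Y,τ]. -/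
open MvPolynomial
set_option maxHeartbeats 2000000

lemma pderiv_ofNat' (i : Fin 3) (n : ℕ) [n.AtLeastTwo] :
    pderiv i (OfNat.ofNat n : MvPolynomial (Fin 3) ℝ) = 0 := by
  rw [← map_ofNat (C : ℝ →+* MvPolynomial (Fin 3) ℝ) n]; exact pderiv_C

lemma pderiv_two (i : Fin 3) : pderiv i (2 : MvPolynomial (Fin 3) ℝ) = 0 := pderiv_ofNat' i 2
lemma pderiv_four (i : Fin 3) : pderiv i (4 : MvPolynomial (Fin 3) ℝ) = 0 := pderiv_ofNat' i 4
lemma pderiv_eight (i : Fin 3) : pderiv i (8 : MvPolynomial (Fin 3) ℝ) = 0 := pderiv_ofNat' i 8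

lemma pderiv_comm' (i j : Fin 3) (f : MvPolynomial (Fin 3) ℝ) :
    pderiv i (pderiv j f) = pderiv j (pderiv i f) := by
  induction f using MvPolynomial.induction_on with
  | C a => simp [pderiv_C]
  | add p q hp hq => simp [hp, hq]
  | mul_X p n hp =>
    rcases eq_or_ne n i with rfl | hi <;> rcases eq_or_ne n j with rfl | hj <;>
      simp [pderiv_mul, hp, Pi.single_eq_of_ne, Ne.symm, *] <;> ring

/-- The stratified symplectic Poisson bracket of the "canoe" on the polynomial
ring `ℝ[X, Y, τ]`, with variables `0 ↦ X`, `1 ↦ Y`, `2 ↦ τ`: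
`{f,g} = (X² + Y² + 8τ − 4)(∂_X f ∂_Y g − ∂_Y f ∂_X g)
        + 2(1−τ)Y(∂_X f ∂_τ g − ∂_τ f ∂_X g)
        + 2τX(∂_Y f ∂_τ g − ∂_τ f ∂_Y g)`. -/
noncomputable def canoeBracket (f g : MvPolynomial (Fin 3) ℝ) :
    MvPolynomial (Fin 3) ℝ :=
  (X 0 ^ 2 + X 1 ^ 2 + 8 * X 2 - 4) * (pderiv 0 f * pderiv 1 g - pderiv 1 f * pderiv 0 g)
    + 2 * (1 - X 2) * X 1 * (pderiv 0 f * pderiv 2 g - pderiv 2 f * pderiv 0 g)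
    + 2 * X 2 * X 0 * (pderiv 1 f * pderiv 2 g - pderiv 2 f * pderiv 1 g)

/-- The canoe bracket satisfies `{X,Y} = X² + Y² + 4(2τ − 1)`,
`{X,τ} = 2(1−τ)Y`, `{Y,τ} = 2τX`, obeys the Jacobi identity, and
`R = Y² − (X² + Y² + 4(τ−1))τ` is a Casimir element. -/
theorem canoeBracket_jacobi_and_casimir :
    canoeBracket (X 0) (X 1) = X 0 ^ 2 + X 1 ^ 2 + 4 * (2 * X 2 - 1) ∧
    canoeBracket (X 0) (X 2) = 2 * (1 - X 2) * X 1 ∧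
    canoeBracket (X 1) (X 2) = 2 * X 2 * X 0 ∧
    (∀ f g h : MvPolynomial (Fin 3) ℝ,
      canoeBracket f (canoeBracket g h) + canoeBracket g (canoeBracket h f)
        + canoeBracket h (canoeBracket f g) = 0) ∧
    (∀ f : MvPolynomial (Fin 3) ℝ,
      canoeBracket f (X 1 ^ 2 - (X 0 ^ 2 + X 1 ^ 2 + 4 * (X 2 - 1)) * X 2) = 0) := by
  refine ⟨?_, ?_, ?_, ?_, ?_⟩
  · simp [canoeBracket]; ring
  · simp [canoeBracket]
  · simp [canoeBracket]
  · intro f g h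
    simp only [canoeBracket, map_add, map_sub, pderiv_mul, pderiv_two, pderiv_four, pderiv_eight, pderiv_one,
      pderiv_pow, pderiv_X_self, pderiv_X_of_ne (by decide : (0 : Fin 3) ≠ 1),
      pderiv_X_of_ne (by decide : (0 : Fin 3) ≠ 2),
      pderiv_X_of_ne (by decide : (1 : Fin 3) ≠ 0),
      pderiv_X_of_ne (by decide : (1 : Fin 3) ≠ 2),
      pderiv_X_of_ne (by decide : (2 : Fin 3) ≠ 0),
      pderiv_X_of_ne (by decide : (2 : Fin 3) ≠ 1),
      mul_zero, zero_mul, mul_one, one_mul, add_zero, zero_add, sub_zero, zero_sub,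
      neg_zero, Nat.cast_ofNat, pow_one]
    simp only [pderiv_comm' 1 0, pderiv_comm' 2 0, pderiv_comm' 2 1]
    push_cast
    ring
  · intro f
    simp only [canoeBracket, map_add, map_sub, pderiv_mul, pderiv_two, pderiv_four, pderiv_eight, pderiv_one,
      pderiv_pow, pderiv_X_self, pderiv_X_of_ne (by decide : (0 : Fin 3) ≠ 1),
      pderiv_X_of_ne (by decide : (0 : Fin 3) ≠ 2),
      pderiv_X_of_ne (by decide : (1 : Fin 3) ≠ 0),
      pderiv_X_of_ne (by decide : (1 : Fin 3) ≠ 2),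
      pderiv_X_of_ne (by decide : (2 : Fin 3) ≠ 0),
      pderiv_X_of_ne (by decide : (2 : Fin 3) ≠ 1),
      mul_zero, zero_mul, mul_one, one_mul, add_zero, zero_add, sub_zero, zero_sub,
      neg_zero, Nat.cast_ofNat, pow_one]
    push_cast
    ring
end

section
/- Let s ≥ 1 and let q, p ∈ ℝˢ. Set x = (|q|² − |p|²)/2, y = ⟨q, p⟩, and r = (|q|² + |p|²)/2. Then r ≥ 0 and x² + y² ≤ r², with equality x² + y² = r² if and only if qᵢpⱼ = qⱼpᵢ for all indices i, j (that is, the angular momentum q·pᵀ − p·qᵀ vanishes). Moreover, for every triple (x, y, r) ∈ ℝ³ with x² + y² = r² and r ≥ 0 there exists a pair (q, p) ∈ ℝˢ × ℝˢ with vanishing angular momentum realizing it. -/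
open RealInnerProductSpace

private lemma lagrange_identity (s : ℕ) (q p : Fin s → ℝ) :
    ∑ i, ∑ j, (q i * p j - q j * p i) ^ 2 =
      2 * ((∑ i, q i ^ 2) * (∑ i, p i ^ 2)) - 2 * (∑ i, q i * p i) ^ 2 := by
  have h1 : (∑ i, q i ^ 2) * (∑ i, p i ^ 2) = ∑ i, ∑ j, q i ^ 2 * p j ^ 2 :=
    Finset.sum_mul_sum _ _ _ _
  have h2 : (∑ i, q i * p i) ^ 2 = ∑ i, ∑ j, (q i * p i) * (q j * p j) := by
    rw [sq]; exact Finset.sum_mul_sum _ _ _ _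
  have h3 : ∑ i, ∑ j, q i ^ 2 * p j ^ 2 = ∑ i, ∑ j, q j ^ 2 * p i ^ 2 :=
    Finset.sum_comm
  rw [h1, h2]
  have : ∀ i ∈ Finset.univ, ∑ j, (q i * p j - q j * p i) ^ 2 =
      ∑ j, (q i ^ 2 * p j ^ 2 + q j ^ 2 * p i ^ 2 - 2 * ((q i * p i) * (q j * p j))) := by
    intro i _
    apply Finset.sum_congr rfl
    intro j _
    ring
  rw [Finset.sum_congr rfl this]
  simp only [Finset.sum_sub_distrib, Finset.sum_add_distrib, ← Finset.mul_sum,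
    ← Finset.sum_mul]
  ring

/-- For a single particle in `ℝˢ` with position `q` and momentum `p`, the
invariants `x = (|q|² − |p|²)/2`, `y = ⟨q,p⟩`, `r = (|q|² + |p|²)/2` satisfy
`r ≥ 0`, `x² + y² ≤ r²`, with equality iff the angular momentum
`q pᵀ − p qᵀ` vanishes; and every point of the semicone
`{x² + y² = r², r ≥ 0}` arises this way from a pair with zero angular
momentum. -/
theorem zero_angular_momentum_reduced_space (s : ℕ) (hs : 1 ≤ s) :
    (∀ q p : EuclideanSpace ℝ (Fin s),
      let x : ℝ := (‖q‖ ^ 2 - ‖p‖ ^ 2) / 2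
      let y : ℝ := ⟪q, p⟫
      let r : ℝ := (‖q‖ ^ 2 + ‖p‖ ^ 2) / 2
      0 ≤ r ∧ x ^ 2 + y ^ 2 ≤ r ^ 2 ∧
        (x ^ 2 + y ^ 2 = r ^ 2 ↔ ∀ i j : Fin s, q i * p j = q j * p i)) ∧
    (∀ x y r : ℝ, x ^ 2 + y ^ 2 = r ^ 2 → 0 ≤ r →
      ∃ q p : EuclideanSpace ℝ (Fin s),
        (∀ i j : Fin s, q i * p j = q j * p i) ∧
        (‖q‖ ^ 2 - ‖p‖ ^ 2) / 2 = x ∧ ⟪q, p⟫ = y ∧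
        (‖q‖ ^ 2 + ‖p‖ ^ 2) / 2 = r) := by
  constructor
  · intro q p x y r
    have hnq : ‖q‖ ^ 2 = ∑ i, q i ^ 2 := by
      rw [EuclideanSpace.norm_eq, Real.sq_sqrt (by positivity)]; simp [sq]
    have hnp : ‖p‖ ^ 2 = ∑ i, p i ^ 2 := by
      rw [EuclideanSpace.norm_eq, Real.sq_sqrt (by positivity)]; simp [sq]
    have hip : ⟪q, p⟫ = ∑ i, q i * p i := by
      simp [PiLp.inner_apply, RCLike.inner_apply]
      exact Finset.sum_congr rfl fun i _ => mul_comm _ _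
    have key : r ^ 2 - (x ^ 2 + y ^ 2) =
        (1 / 2) * ∑ i, ∑ j, (q i * p j - q j * p i) ^ 2 := by
      show ((‖q‖ ^ 2 + ‖p‖ ^ 2) / 2) ^ 2 -
        (((‖q‖ ^ 2 - ‖p‖ ^ 2) / 2) ^ 2 + (⟪q, p⟫ : ℝ) ^ 2) = _
      rw [hnq, hnp, hip, lagrange_identity]
      ring
    have hsumnn : 0 ≤ ∑ i, ∑ j, (q i * p j - q j * p i) ^ 2 := by positivity
    refine ⟨by positivity, by nlinarith, ?_⟩
    constructor
    · intro h i j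
      have hz : ∑ i, ∑ j, (q i * p j - q j * p i) ^ 2 = 0 := by
        nlinarith [key]
      have h1 := (Finset.sum_eq_zero_iff_of_nonneg
        (fun i _ => Finset.sum_nonneg fun j _ => sq_nonneg _)).mp hz i (Finset.mem_univ i)
      have h2 := (Finset.sum_eq_zero_iff_of_nonneg
        (fun j _ => sq_nonneg _)).mp h1 j (Finset.mem_univ j)
      have := pow_eq_zero_iff (n := 2) (by norm_num) |>.mp h2
      linarith [sub_eq_zero.mp this]
    · intro h
      have hz : ∑ i, ∑ j, (q i * p j - q j * p i) ^ 2 = 0 := by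
        apply Finset.sum_eq_zero; intro i _
        apply Finset.sum_eq_zero; intro j _
        rw [h i j]; ring
      nlinarith [key, hz]
  · intro x y r hxy hr
    set i0 : Fin s := ⟨0, hs⟩
    have hrx : 0 ≤ r + x := by nlinarith [sq_nonneg y, sq_nonneg (r + x)]
    have key : ∀ a b : ℝ, a * b = y → a ^ 2 = r + x → b ^ 2 = r - x →
        ∃ q p : EuclideanSpace ℝ (Fin s),
          (∀ i j : Fin s, q i * p j = q j * p i) ∧
          (‖q‖ ^ 2 - ‖p‖ ^ 2) / 2 = x ∧ ⟪q, p⟫ = y ∧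
          (‖q‖ ^ 2 + ‖p‖ ^ 2) / 2 = r := by
      intro a b hab ha hb
      refine ⟨EuclideanSpace.single i0 a, EuclideanSpace.single i0 b, ?_, ?_, ?_, ?_⟩
      · intro i j
        simp only [EuclideanSpace.single_apply]
        by_cases hi : i = i0 <;> by_cases hj : j = i0 <;> simp [hi, hj]
      · rw [EuclideanSpace.norm_single, EuclideanSpace.norm_single, Real.norm_eq_abs,
          Real.norm_eq_abs, sq_abs, sq_abs, ha, hb]
        ring
      · rw [EuclideanSpace.inner_single_left]
        simpa using hab
      · rw [EuclideanSpace.norm_single, EuclideanSpace.norm_single, Real.norm_eq_abs,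
          Real.norm_eq_abs, sq_abs, sq_abs, ha, hb]
        ring
    rcases eq_or_lt_of_le hrx with h0 | hpos
    · have hx : x = -r := by linarith
      have hy : y = 0 := by nlinarith
      exact key 0 (Real.sqrt (r - x)) (by simp [hy])
        (by simpa using h0) (Real.sq_sqrt (by linarith))
    · have ha : (Real.sqrt (r + x)) ^ 2 = r + x := Real.sq_sqrt (le_of_lt hpos)
      have hane : Real.sqrt (r + x) ≠ 0 := by positivity
      refine key (Real.sqrt (r + x)) (y / Real.sqrt (r + x)) ?_ ha ?_
      · field_simp
      · rw [div_pow, ha]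
        rw [div_eq_iff (by positivity)]
        nlinarith
end

section
/- Let s ≤ ℓ be positive integers and let S be a complex ℓ×ℓ matrix. Then S is symmetric (Sᵀ = S) with rank S ≤ s if and only if there exists a complex s×ℓ matrix A with S = Aᵀ·A. -/
open Matrix

/-- A complex `ℓ×ℓ` matrix is symmetric of rank at most `s` iff it factors as
`Aᵀ·A` for some complex `s×ℓ` matrix `A`.  This identifies the image of the
closure of the `s`-th holomorphic nilpotent orbit in `𝔰𝔭(ℓ,ℝ)` under the
projection to `Sym²(ℂ^ℓ)`. -/
theorem symmetric_rank_le_iff_factor (s ℓ : ℕ) (hs : 1 ≤ s) (hsl : s ≤ ℓ)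
    (S : Matrix (Fin ℓ) (Fin ℓ) ℂ) :
    (S.transpose = S ∧ S.rank ≤ s) ↔
      ∃ A : Matrix (Fin s) (Fin ℓ) ℂ, S = A.transpose * A := by
  classical
  constructor
  · rintro ⟨hsym, hrank⟩
    set B : LinearMap.BilinForm ℂ (Fin ℓ → ℂ) := Matrix.toLinearMap₂' ℂ S with hB
    have hBapp : ∀ x y, B x y = x ⬝ᵥ (S *ᵥ y) := fun x y =>
      Matrix.toLinearMap₂'_apply' S x y
    have hBsymm : B.IsSymm := by
      rw [LinearMap.BilinForm.isSymm_def]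
      intro x y
      simp only [RingHom.id_apply, hBapp]
      conv_rhs => rw [← hsym]
      rw [dotProduct_mulVec, mulVec_transpose]
      exact dotProduct_comm _ _
    obtain ⟨v₀, hv₀⟩ := LinearMap.BilinForm.exists_orthogonal_basis (LinearMap.BilinForm.isSymm_iff.1 hBsymm)
    have hdim : Module.finrank ℂ (Fin ℓ → ℂ) = ℓ := by simp
    let v : Module.Basis (Fin ℓ) ℂ (Fin ℓ → ℂ) := v₀.reindex (finCongr hdim)
    have hv : ∀ i j, i ≠ j → B (v i) (v j) = 0 := by
      intro i j hij
      have := hv₀ (show (finCongr hdim).symm i ≠ (finCongr hdim).symm j from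
        fun h => hij (by simpa using congrArg (finCongr hdim) h))
      simpa [v, Module.Basis.reindex_apply] using this
    set M : Matrix (Fin ℓ) (Fin ℓ) ℂ := (Pi.basisFun ℂ (Fin ℓ)).toMatrix ⇑v with hM
    have hMinv : Invertible M := (Pi.basisFun ℂ (Fin ℓ)).invertibleToMatrix v
    have hMdet : IsUnit M.det := isUnit_det_of_invertible M
    have hMentry : ∀ i j, M i j = v j i := by
      intro i j
      simp [hM, Module.Basis.toMatrix_apply, Pi.basisFun_repr]
    set d : Fin ℓ → ℂ := fun i => B (v i) (v i) with hd
    have hD : Mᵀ * S * M = diagonal d := by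
      have key : ∀ i j, (Mᵀ * S * M) i j = B (v i) (v j) := by
        intro i j
        simp only [hBapp, Matrix.mul_apply, transpose_apply, hMentry, dotProduct, mulVec,
          Finset.sum_mul, Finset.mul_sum]
        rw [Finset.sum_comm]
        refine Finset.sum_congr rfl fun k _ => Finset.sum_congr rfl fun l _ => by ring
      ext i j
      by_cases hij : i = j
      · subst hij; simp [key, diagonal, hd]
      · simp [key, diagonal, hij, hv i j hij]
    have hrankd : (diagonal d).rank = S.rank := by
      rw [← hD, rank_mul_eq_left_of_isUnit_det _ _ hMdet,
        rank_mul_eq_right_of_isUnit_det _ _ (by simpa using hMdet)]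
    have hcard : Fintype.card {i // d i ≠ 0} ≤ s := by
      rw [← Matrix.rank_diagonal d, hrankd]; exact hrank
    obtain ⟨f⟩ : Nonempty ({i // d i ≠ 0} ↪ Fin s) :=
      Function.Embedding.nonempty_of_card_le (by simpa using hcard)
    have hroot : ∀ i, ∃ z : ℂ, z * z = d i := by
      intro i
      obtain ⟨z, hz⟩ := IsAlgClosed.exists_pow_nat_eq (d i) two_pos
      exact ⟨z, by rw [← pow_two]; exact hz⟩
    choose c hc using hroot
    have hc0 : ∀ i, d i = 0 → c i = 0 := by
      intro i h
      exact mul_self_eq_zero.mp (by rw [hc i, h])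
    set Q : Matrix (Fin ℓ) (Fin ℓ) ℂ := M⁻¹ with hQ
    have hMQ : M * Q = 1 := mul_nonsing_inv M hMdet
    have hS : S = Qᵀ * diagonal d * Q := by
      have : Qᵀ * (Mᵀ * S * M) * Q = S := by
        have h1 : Qᵀ * Mᵀ = 1 := by rw [← transpose_mul, hMQ, transpose_one]
        calc Qᵀ * (Mᵀ * S * M) * Q = (Qᵀ * Mᵀ) * S * (M * Q) := by
              simp only [Matrix.mul_assoc]
          _ = S := by rw [h1, hMQ, Matrix.one_mul, Matrix.mul_one]
      rw [← this, hD]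
    set e : Fin ℓ → ℂ := fun i => if d i ≠ 0 then 1 else 0 with he
    set E : Matrix (Fin s) (Fin ℓ) ℂ :=
      Matrix.of (fun k i => if h : d i ≠ 0 then (if f ⟨i, h⟩ = k then 1 else 0) else 0) with hE
    have hEE : Eᵀ * E = diagonal e := by
      ext i j
      simp only [Matrix.mul_apply, transpose_apply, hE, Matrix.of_apply]
      by_cases hi : d i ≠ 0
      · by_cases hj : d j ≠ 0
        · simp only [dif_pos hi, dif_pos hj, ite_mul, one_mul, zero_mul, ← ite_and]
          by_cases hij : i = j
          · subst hij
            rw [diagonal_apply_eq]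
            simp only [and_self]
            rw [Finset.sum_ite_eq Finset.univ (f ⟨i, hi⟩) (fun _ => (1:ℂ))]
            simp [he, hi]
          · have hne : f ⟨i, hi⟩ ≠ f ⟨j, hj⟩ := by
              intro h
              exact hij (congrArg Subtype.val (f.injective h))
            rw [Finset.sum_eq_zero, diagonal_apply_ne _ hij]
            intro k _
            rw [if_neg]
            rintro ⟨h1, h2⟩
            exact hne (h1.trans h2.symm)
        · have hij : i ≠ j := by rintro rfl; exact hj hi
          simp only [dif_neg hj, mul_zero, Finset.sum_const_zero,
            diagonal_apply_ne _ hij]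
      · have hdi : d i = 0 := not_not.mp hi
        simp only [dif_neg hi, zero_mul, Finset.sum_const_zero]
        by_cases hij : i = j
        · subst hij
          rw [diagonal_apply_eq]
          simp [he, hdi]
        · rw [diagonal_apply_ne _ hij]
    refine ⟨E * (diagonal c * Q), ?_⟩
    have hced : (fun i => c i * (e i * c i)) = d := by
      funext i
      by_cases h : d i = 0
      · simp [hc0 i h, h]
      · simp only [he, if_pos h]
        rw [one_mul, hc i]
    calc S = Qᵀ * diagonal d * Q := hS
      _ = (E * (diagonal c * Q))ᵀ * (E * (diagonal c * Q)) := by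
          simp only [transpose_mul, diagonal_transpose, Matrix.mul_assoc]
          rw [← Matrix.mul_assoc Eᵀ E, hEE,
            ← Matrix.mul_assoc (diagonal e) (diagonal c) Q, diagonal_mul_diagonal,
            ← Matrix.mul_assoc (diagonal c) (diagonal fun i => e i * c i) Q,
            diagonal_mul_diagonal]
          exact congrArg (fun X => Qᵀ * (X * Q)) (congrArg diagonal hced).symm
  · rintro ⟨A, rfl⟩
    refine ⟨by rw [transpose_mul, transpose_transpose], ?_⟩
    calc (Aᵀ * A).rank ≤ A.rank := rank_mul_le_right _ _
      _ ≤ Fintype.card (Fin s) := rank_le_card_height A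
      _ = s := Fintype.card_fin s
end

section
/- Define F(t) = (Σ_{n≥1} (−1)^{n+1}·n²·e^{−t·n²}) / (Σ_{n≥1} n²·e^{−t·n²}) for t > 0. Then F(t) → 1 as t → ∞. In particular, the tunneling probability |⟨ψ₊,ψ₋⟩|² = F(t)² tends to 1 as t → ∞. -/
open Filter

lemma tunnel_aux (s : ℕ → ℝ) (hs : ∀ n, |s n| ≤ 1) (h1 : s 1 = 1) :
    Tendsto (fun t : ℝ => ∑' n : ℕ, s n * (n : ℝ) ^ 2 * Real.exp (-t * ((n : ℝ) ^ 2 - 1)))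
      atTop (nhds 1) := by
  have hsum : Summable (fun n : ℕ => Real.exp 1 * ((n : ℝ) ^ 2 * Real.exp (-1) ^ n)) := by
    apply Summable.mul_left
    have : ‖Real.exp (-1)‖ < 1 := by
      rw [Real.norm_eq_abs, abs_of_pos (Real.exp_pos _)]
      exact Real.exp_lt_one_iff.mpr (by norm_num)
    simpa using summable_pow_mul_geometric_of_norm_lt_one 2 this
  have hlim : ∀ k : ℕ, Tendsto (fun t : ℝ => s k * (k : ℝ) ^ 2 * Real.exp (-t * ((k : ℝ) ^ 2 - 1)))
      atTop (nhds (if k = 1 then (1 : ℝ) else 0)) := by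
    intro k
    match k with
    | 0 => simp only [Nat.cast_zero]; simpa using tendsto_const_nhds
    | 1 =>
      have heq : (fun t : ℝ => s 1 * ((1 : ℕ) : ℝ) ^ 2 * Real.exp (-t * (((1 : ℕ) : ℝ) ^ 2 - 1)))
          = fun _ => (1 : ℝ) := by
        funext t; simp [h1]
      rw [heq]; simpa using tendsto_const_nhds
    | (m + 2) =>
      have hc : (0 : ℝ) < ((m + 2 : ℕ) : ℝ) ^ 2 - 1 := by
        have h2 : (2 : ℝ) ≤ ((m + 2 : ℕ) : ℝ) := by exact_mod_cast Nat.le_add_left 2 m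
        nlinarith
      have hexp : Tendsto (fun t : ℝ => Real.exp (-t * (((m + 2 : ℕ) : ℝ) ^ 2 - 1))) atTop
          (nhds 0) := by
        apply Real.tendsto_exp_atBot.comp
        have h : Tendsto (fun t : ℝ => t * (((m + 2 : ℕ) : ℝ) ^ 2 - 1)) atTop atTop :=
          Tendsto.atTop_mul_const hc tendsto_id
        exact (tendsto_neg_atTop_atBot.comp h).congr (fun t => by simp [neg_mul])
      have h := hexp.const_mul (s (m + 2) * ((m + 2 : ℕ) : ℝ) ^ 2)
      simp only [mul_zero] at h
      simpa [if_neg (by omega : ¬ m + 2 = 1), mul_assoc] using h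
  have hbound : ∀ᶠ t : ℝ in atTop, ∀ k : ℕ,
      ‖s k * (k : ℝ) ^ 2 * Real.exp (-t * ((k : ℝ) ^ 2 - 1))‖ ≤
        Real.exp 1 * ((k : ℝ) ^ 2 * Real.exp (-1) ^ k) := by
    filter_upwards [eventually_ge_atTop (1 : ℝ)] with t ht k
    match k with
    | 0 => simp
    | (m + 1) =>
      set k : ℕ := m + 1 with hkdef
      have hk1 : (1 : ℝ) ≤ (k : ℝ) := by exact_mod_cast Nat.one_le_iff_ne_zero.mpr (by omega)
      have hkey : -t * ((k : ℝ) ^ 2 - 1) ≤ 1 - (k : ℝ) := by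
        nlinarith [mul_nonneg (sub_nonneg.mpr ht) (by nlinarith : (0:ℝ) ≤ (k : ℝ) ^ 2 - 1)]
      have hexple : Real.exp (-t * ((k : ℝ) ^ 2 - 1)) ≤ Real.exp 1 * Real.exp (-1) ^ k := by
        calc Real.exp (-t * ((k : ℝ) ^ 2 - 1)) ≤ Real.exp (1 - (k : ℝ)) :=
              Real.exp_le_exp.mpr hkey
          _ = Real.exp 1 * Real.exp (-(k : ℝ)) := by rw [sub_eq_add_neg, Real.exp_add]
          _ = Real.exp 1 * Real.exp (-1) ^ k := by
              norm_num [← Real.exp_nat_mul]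
      rw [norm_mul, norm_mul, Real.norm_eq_abs, Real.norm_eq_abs, Real.norm_eq_abs,
        abs_of_nonneg (by positivity : (0:ℝ) ≤ (k : ℝ) ^ 2), abs_of_pos (Real.exp_pos _)]
      calc |s k| * (k : ℝ) ^ 2 * Real.exp (-t * ((k : ℝ) ^ 2 - 1))
          ≤ 1 * (k : ℝ) ^ 2 * (Real.exp 1 * Real.exp (-1) ^ k) := by
            gcongr
            exact hs k
        _ = Real.exp 1 * ((k : ℝ) ^ 2 * Real.exp (-1) ^ k) := by ring
  have h := tendsto_tsum_of_dominated_convergence hsum hlim hbound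
  simpa [tsum_ite_eq] using h

/-- The tunneling amplitude
`F(t) = (Σ_{n≥1}(−1)^{n+1}n²e^{−tn²})/(Σ_{n≥1}n²e^{−tn²})` tends to `1` as
`t → ∞`; in particular the tunneling probability `F(t)²` tends to `1`. -/
theorem tunneling_probability_tendsto_one :
    let F : ℝ → ℝ := fun t =>
      (∑' n : ℕ, (-1 : ℝ) ^ (n + 1) * (n : ℝ) ^ 2 * Real.exp (-t * (n : ℝ) ^ 2)) /
        (∑' n : ℕ, (n : ℝ) ^ 2 * Real.exp (-t * (n : ℝ) ^ 2))
    Tendsto F atTop (nhds 1) ∧ Tendsto (fun t => (F t) ^ 2) atTop (nhds 1) := by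
  intro F
  have hrw : ∀ (s : ℕ → ℝ) (t : ℝ),
      Real.exp t * ∑' n : ℕ, s n * (n : ℝ) ^ 2 * Real.exp (-t * (n : ℝ) ^ 2)
        = ∑' n : ℕ, s n * (n : ℝ) ^ 2 * Real.exp (-t * ((n : ℝ) ^ 2 - 1)) := by
    intro s t
    rw [← tsum_mul_left]
    congr 1; funext n
    rw [show -t * ((n : ℝ) ^ 2 - 1) = -t * (n : ℝ) ^ 2 + t by ring, Real.exp_add]
    ring
  have hN : Tendsto (fun t : ℝ => Real.exp t *
      ∑' n : ℕ, (-1 : ℝ) ^ (n + 1) * (n : ℝ) ^ 2 * Real.exp (-t * (n : ℝ) ^ 2)) atTop (nhds 1) := by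
    have := tunnel_aux (fun n => (-1 : ℝ) ^ (n + 1)) (fun n => by rw [abs_pow]; simp) (by norm_num)
    exact this.congr fun t => (hrw _ t).symm
  have hD : Tendsto (fun t : ℝ => Real.exp t *
      ∑' n : ℕ, (n : ℝ) ^ 2 * Real.exp (-t * (n : ℝ) ^ 2)) atTop (nhds 1) := by
    have := tunnel_aux (fun _ => (1 : ℝ)) (fun n => by norm_num) rfl
    simp only [one_mul] at this
    exact this.congr fun t => by
      have := hrw (fun _ => (1 : ℝ)) t
      simpa using this.symm
  have hFeq : ∀ t : ℝ, F t = (Real.exp t *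
      ∑' n : ℕ, (-1 : ℝ) ^ (n + 1) * (n : ℝ) ^ 2 * Real.exp (-t * (n : ℝ) ^ 2)) /
      (Real.exp t * ∑' n : ℕ, (n : ℝ) ^ 2 * Real.exp (-t * (n : ℝ) ^ 2)) := by
    intro t
    rw [mul_div_mul_left _ _ (Real.exp_ne_zero t)]
  have hF : Tendsto F atTop (nhds 1) := by
    have := hN.div hD one_ne_zero
    simp only [div_one] at this
    exact this.congr fun t => (hFeq t).symm
  exact ⟨hF, by simpa using hF.pow 2⟩
end

section
/- Define F(t) = (Σ_{n≥1} (−1)^{n+1}·n²·e^{−t·n²}) / (Σ_{n≥1} n²·e^{−t·n²}) for t > 0. Then F(t) → 0 as t → 0⁺. In particular, the tunneling probability |⟨ψ₊,ψ₋⟩|² = F(t)² vanishes in the semiclassical limit t → 0. -/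
open Filter

section TunnelingAux
open Real

-- L1: exp bound
lemma tun_exp_le_rpow {x s : ℝ} (hx : 0 < x) (hs : 0 < s) (hs2 : s ≤ 9/4) :
    Real.exp (-x) ≤ x ^ (-s) := by
  rw [Real.rpow_def_of_pos hx, Real.exp_le_exp]
  rcases le_or_gt x 1 with h1 | h1
  · have : Real.log x ≤ 0 := Real.log_nonpos hx.le h1
    nlinarith [hx]
  · set v : ℝ := x ^ ((1:ℝ)/3) with hv
    have hv1 : (1:ℝ) ≤ v := Real.one_le_rpow h1.le (by norm_num)
    have hlog : Real.log v = (1/3) * Real.log x := Real.log_rpow hx _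
    have hv3 : v ^ (3:ℕ) = x := by
      rw [hv, ← Real.rpow_natCast (x ^ ((1:ℝ)/3)) 3, ← Real.rpow_mul hx.le]
      norm_num
    have hlv : Real.log v ≤ v - 1 := Real.log_le_sub_one_of_pos (by linarith)
    have hkey : (27/4) * (v - 1) ≤ v ^ (3:ℕ) := by nlinarith [sq_nonneg (v - 3/2)]
    nlinarith [hx.le]

lemma tun_cast_le_sq (n : ℕ) : (n : ℝ) ≤ (n : ℝ) ^ 2 := by
  rcases Nat.eq_zero_or_pos n with h | h
  · simp [h]
  · have : (1:ℝ) ≤ (n:ℝ) := by exact_mod_cast h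
    nlinarith

lemma tun_summable (t : ℝ) (ht : 0 < t) (k : ℕ) :
    Summable (fun n : ℕ => (n : ℝ) ^ k * Real.exp (-t * (n : ℝ) ^ 2)) := by
  refine Summable.of_nonneg_of_le (fun n => by positivity)
    (fun n => ?_) (summable_pow_mul_geometric_of_norm_lt_one k
      (r := Real.exp (-t)) ?_)
  · apply mul_le_mul_of_nonneg_left _ (by positivity)
    rw [← Real.exp_nat_mul, Real.exp_le_exp]
    nlinarith [tun_cast_le_sq n]
  · rw [Real.norm_eq_abs, abs_of_pos (Real.exp_pos _), Real.exp_lt_one_iff]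
    linarith

lemma tun_sum_sq (N : ℕ) : ((N:ℝ))^3/3 ≤ ∑ n ∈ Finset.range (N+1), (n:ℝ)^2 := by
  induction N with
  | zero => simp
  | succ m ih =>
    rw [Finset.sum_range_succ]
    push_cast
    push_cast at ih
    nlinarith [ih, Nat.cast_nonneg (α:=ℝ) m]

lemma tun_denom_lb (t : ℝ) (ht : 0 < t) (ht1 : t ≤ 1) :
    t ^ (-(3/2) : ℝ) / 72 ≤ ∑' n : ℕ, (n : ℝ) ^ 2 * Real.exp (-t * (n : ℝ) ^ 2) := by
  set s := Real.sqrt t with hsdef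
  have hs : 0 < s := Real.sqrt_pos.2 ht
  have hs1 : s ≤ 1 := by
    rw [hsdef, show (1:ℝ) = Real.sqrt 1 by simp]
    exact Real.sqrt_le_sqrt ht1
  have hsinv : 1 ≤ s⁻¹ := (one_le_inv_iff₀).2 ⟨hs, hs1⟩
  set N : ℕ := ⌊s⁻¹⌋₊ with hNdef
  have hN1 : 1 ≤ N := Nat.le_floor (by exact_mod_cast hsinv)
  have hN1' : (1:ℝ) ≤ (N:ℝ) := by exact_mod_cast hN1
  have hNle : (N:ℝ) ≤ s⁻¹ := Nat.floor_le (by positivity)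
  have hNge : s⁻¹ ≤ 2 * N := by
    have := Nat.lt_floor_add_one s⁻¹
    rw [← hNdef] at this
    linarith
  have hss : s^2 = t := Real.sq_sqrt ht.le
  -- each term with n ≤ N has exp factor ≥ 1/3
  have hterm : ∀ n ∈ Finset.range (N+1), (1/3) * (n:ℝ)^2 ≤ (n:ℝ)^2 * Real.exp (-t * (n:ℝ)^2) := by
    intro n hn
    rw [Finset.mem_range, Nat.lt_succ_iff] at hn
    have hnN : (n:ℝ) ≤ N := by exact_mod_cast hn
    have h1 : t * (n:ℝ)^2 ≤ 1 := by
      have h2 : (n:ℝ)^2 ≤ (s⁻¹)^2 := by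
        apply pow_le_pow_left₀ (Nat.cast_nonneg n)
        linarith
      have : (s⁻¹)^2 = t⁻¹ := by rw [inv_pow, hss]
      rw [this] at h2
      calc t * (n:ℝ)^2 ≤ t * t⁻¹ := by
            apply mul_le_mul_of_nonneg_left h2 ht.le
        _ = 1 := mul_inv_cancel₀ ht.ne'
    have hexp : (1/3 : ℝ) ≤ Real.exp (-t * (n:ℝ)^2) := by
      have h3 : Real.exp (-1) ≤ Real.exp (-t * (n:ℝ)^2) := by
        rw [Real.exp_le_exp]; linarith
      have h4 : (1/3 : ℝ) ≤ Real.exp (-1) := by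
        rw [Real.exp_neg]
        rw [one_div, inv_le_inv₀ (by norm_num) (Real.exp_pos 1)]
        have := Real.exp_one_lt_d9
        linarith
      linarith
    nlinarith [sq_nonneg (n:ℝ)]
  have hsum : (1/3) * ((N:ℝ)^3/3) ≤ ∑ n ∈ Finset.range (N+1), (n:ℝ)^2 * Real.exp (-t * (n:ℝ)^2) := by
    calc (1/3) * ((N:ℝ)^3/3) ≤ (1/3) * ∑ n ∈ Finset.range (N+1), (n:ℝ)^2 := by
          have := tun_sum_sq N; linarith
      _ = ∑ n ∈ Finset.range (N+1), (1/3) * (n:ℝ)^2 := by rw [Finset.mul_sum]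
      _ ≤ _ := Finset.sum_le_sum hterm
  have htsum : ∑ n ∈ Finset.range (N+1), (n:ℝ)^2 * Real.exp (-t * (n:ℝ)^2)
      ≤ ∑' n : ℕ, (n : ℝ) ^ 2 * Real.exp (-t * (n : ℝ) ^ 2) :=
    Summable.sum_le_tsum _ (fun n _ => by positivity) (tun_summable t ht 2)
  have hrpow : t ^ (-(3/2) : ℝ) = (s⁻¹)^(3:ℕ) := by
    rw [hsdef, Real.sqrt_eq_rpow, ← Real.rpow_neg ht.le,
      ← Real.rpow_natCast (t ^ (-(1/2):ℝ)) 3, ← Real.rpow_mul ht.le]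
    norm_num
  have hcube : (s⁻¹)^(3:ℕ) ≤ 8 * (N:ℝ)^3 := by
    have : (s⁻¹)^(3:ℕ) ≤ (2*(N:ℝ))^(3:ℕ) := pow_le_pow_left₀ (by positivity) hNge 3
    nlinarith [this]
  rw [hrpow]
  calc (s⁻¹)^(3:ℕ)/72 ≤ 8*(N:ℝ)^3/72 := by linarith
    _ = (1/3) * ((N:ℝ)^3/3) := by ring
    _ ≤ _ := le_trans hsum htsum

-- rpow computation
lemma tun_poly_exp_bound (t : ℝ) (ht : 0 < t) {K : ℝ} (hK : 1 ≤ K) :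
    5*K*Real.exp (-(t*K^2)) + 20*t*K^3*Real.exp (-(t*K^2))
      ≤ 25 * t^(-(5/4):ℝ) * K^(-(3/2):ℝ) := by
  have hK0 : 0 < K := by linarith
  have hx : 0 < t * K^2 := by positivity
  have hKsq : (K^2 : ℝ) = K ^ ((2:ℕ):ℝ) := by rw [Real.rpow_natCast]
  have e1 : Real.exp (-(t*K^2)) ≤ (t*K^2) ^ (-(5/4):ℝ) :=
    tun_exp_le_rpow hx (by norm_num) (by norm_num)
  have e2 : Real.exp (-(t*K^2)) ≤ (t*K^2) ^ (-(9/4):ℝ) :=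
    tun_exp_le_rpow hx (by norm_num) (by norm_num)
  have m1 : (t*K^2) ^ (-(5/4):ℝ) = t^(-(5/4):ℝ) * K ^ (-(5/2):ℝ) := by
    rw [Real.mul_rpow ht.le (by positivity), hKsq, ← Real.rpow_mul hK0.le]
    norm_num
  have m2 : (t*K^2) ^ (-(9/4):ℝ) = t^(-(9/4):ℝ) * K ^ (-(9/2):ℝ) := by
    rw [Real.mul_rpow ht.le (by positivity), hKsq, ← Real.rpow_mul hK0.le]
    norm_num
  have k1 : K * K ^ (-(5/2):ℝ) = K ^ (-(3/2):ℝ) := by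
    rw [show K * K ^ (-(5/2):ℝ) = K^((1:ℕ):ℝ) * K ^ (-(5/2):ℝ) by
      rw [Real.rpow_natCast]; ring]
    rw [← Real.rpow_add hK0]
    norm_num
  have k2 : K^3 * K ^ (-(9/2):ℝ) = K ^ (-(3/2):ℝ) := by
    rw [show (K^3 : ℝ) = K^((3:ℕ):ℝ) by rw [Real.rpow_natCast]]
    rw [← Real.rpow_add hK0]
    norm_num
  have t2 : t * t ^ (-(9/4):ℝ) = t ^ (-(5/4):ℝ) := by
    nth_rewrite 1 [← Real.rpow_one t]
    rw [← Real.rpow_add ht]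
    norm_num
  calc 5*K*Real.exp (-(t*K^2)) + 20*t*K^3*Real.exp (-(t*K^2))
      ≤ 5*K*((t*K^2) ^ (-(5/4):ℝ)) + 20*t*K^3*((t*K^2) ^ (-(9/4):ℝ)) := by
        have h1 : (0:ℝ) ≤ 5*K := by linarith
        have h2 : (0:ℝ) ≤ 20*t*K^3 := by positivity
        nlinarith [mul_le_mul_of_nonneg_left e1 h1, mul_le_mul_of_nonneg_left e2 h2]
    _ = 25 * t^(-(5/4):ℝ) * K^(-(3/2):ℝ) := by
        rw [m1, m2]
        calc 5*K*(t^(-(5/4):ℝ) * K ^ (-(5/2):ℝ)) + 20*t*K^3*(t^(-(9/4):ℝ) * K ^ (-(9/2):ℝ))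
            = 5 * t^(-(5/4):ℝ) * (K * K ^ (-(5/2):ℝ))
              + 20 * (t * t^(-(9/4):ℝ)) * (K^3 * K ^ (-(9/2):ℝ)) := by ring
          _ = 25 * t^(-(5/4):ℝ) * K^(-(3/2):ℝ) := by rw [k1, k2, t2]; ring

lemma tun_diff_bound (t : ℝ) (ht : 0 < t) {K : ℝ} (hK : 1 ≤ K) :
    |(2*K+1)^2 * Real.exp (-t*(2*K+1)^2) - (2*K)^2 * Real.exp (-t*(2*K)^2)|
      ≤ 5*K*Real.exp (-(t*K^2)) + 20*t*K^3*Real.exp (-(t*K^2)) := by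
  have hK0 : 0 < K := by linarith
  set E1 := Real.exp (-t*(2*K+1)^2) with hE1
  set E0 := Real.exp (-t*(2*K)^2) with hE0
  set E := Real.exp (-(t*K^2)) with hE
  have hE1pos : 0 < E1 := Real.exp_pos _
  have hE0pos : 0 < E0 := Real.exp_pos _
  have hE10 : E1 ≤ E0 := by
    rw [hE1, hE0, Real.exp_le_exp]; nlinarith
  have hE0E : E0 ≤ E := by
    rw [hE0, hE, Real.exp_le_exp]; nlinarith
  have hE1E : E1 ≤ E := le_trans hE10 hE0E
  have hsplit : E1 = E0 * Real.exp (-(t*(4*K+1))) := by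
    rw [hE1, hE0, ← Real.exp_add]; ring_nf
  have hexp_lb : 1 - (t*(4*K+1)) ≤ Real.exp (-(t*(4*K+1))) := by
    have := Real.add_one_le_exp (-(t*(4*K+1)))
    linarith
  have hdiff : E0 - E1 ≤ E0 * (t*(4*K+1)) := by
    rw [hsplit]
    have h4 : 0 ≤ t*(4*K+1) := by positivity
    nlinarith [hE0pos, hexp_lb]
  rw [abs_le]
  constructor
  · -- lower bound: -(5KE + 20tK³E) ≤ (2K+1)²E1 - 4K²E0
    have h1 : (2*K+1)^2 * E1 - (2*K)^2 * E0 = (4*K+1)*E1 - (2*K)^2*(E0 - E1) := by ring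
    have h2 : (2*K)^2*(E0 - E1) ≤ (2*K)^2 * (E0 * (t*(4*K+1))) := by
      apply mul_le_mul_of_nonneg_left hdiff (by positivity)
    have h3 : (2*K)^2 * (E0 * (t*(4*K+1))) ≤ 20*t*K^3*E := by
      have hA : (2*K)^2 * (E0 * (t*(4*K+1))) = (4*K^2*(4*K+1)*t) * E0 := by ring
      have hB : 4*K^2*(4*K+1)*t ≤ 20*K^3*t := by
        have : K^2 ≤ K^3 := by nlinarith [mul_nonneg (sq_nonneg K) (show (0:ℝ) ≤ K - 1 by linarith)]
        nlinarith [ht.le]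
      have hC : (4*K^2*(4*K+1)*t) * E0 ≤ (20*K^3*t) * E0 :=
        mul_le_mul_of_nonneg_right hB hE0pos.le
      have hD : (20*K^3*t) * E0 ≤ (20*K^3*t) * E :=
        mul_le_mul_of_nonneg_left hE0E (by positivity)
      calc (2*K)^2 * (E0 * (t*(4*K+1))) = (4*K^2*(4*K+1)*t) * E0 := hA
        _ ≤ (20*K^3*t) * E0 := hC
        _ ≤ (20*K^3*t) * E := hD
        _ = 20*t*K^3*E := by ring
    nlinarith [mul_pos (show (0:ℝ) < 4*K+1 by linarith) hE1pos,
      mul_nonneg (mul_nonneg (by linarith : (0:ℝ) ≤ 5) hK0.le) (le_of_lt (Real.exp_pos (-(t*K^2))))]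
  · have h1 : (2*K+1)^2 * E1 - (2*K)^2 * E0 ≤ (4*K+1)*E1 := by nlinarith [hE10]
    have h2 : (4*K+1)*E1 ≤ 5*K*E := by nlinarith [hE1E, hE1pos]
    have h3 : 0 ≤ 20*t*K^3*E := by positivity
    linarith

noncomputable def tunZ : ℝ := ∑' k : ℕ, (k:ℝ) ^ (-(3/2):ℝ)

lemma tunZ_summable : Summable (fun k : ℕ => (k:ℝ) ^ (-(3/2):ℝ)) :=
  Real.summable_nat_rpow.2 (by norm_num)

lemma tunZ_nonneg : 0 ≤ tunZ :=
  tsum_nonneg fun k => Real.rpow_nonneg (Nat.cast_nonneg k) _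

set_option maxHeartbeats 1000000 in
lemma tun_num_ub (t : ℝ) (ht : 0 < t) (ht1 : t ≤ 1) :
    |∑' n : ℕ, (-1:ℝ)^(n+1) * (n:ℝ)^2 * Real.exp (-t*(n:ℝ)^2)|
      ≤ (1 + 25*tunZ) * t ^ (-(5/4):ℝ) := by
  set f : ℕ → ℝ := fun n => (n:ℝ)^2 * Real.exp (-t*(n:ℝ)^2) with hfdef
  set g : ℕ → ℝ := fun n => (-1:ℝ)^(n+1) * (n:ℝ)^2 * Real.exp (-t*(n:ℝ)^2) with hgdef
  have hf : Summable f := tun_summable t ht 2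
  have hnorm : ∀ n, ‖g n‖ = f n := by
    intro n
    rw [hgdef, hfdef]
    simp only [Real.norm_eq_abs]
    rw [mul_assoc, abs_mul, abs_pow, abs_neg, abs_one, one_pow, one_mul,
      abs_of_nonneg (by positivity : (0:ℝ) ≤ (n:ℝ)^2 * Real.exp (-t*(n:ℝ)^2))]
  have hg : Summable g := by
    refine Summable.of_norm_bounded hf fun n => (hnorm n).le
  have hfe : Summable (fun k => f (2*k)) := hf.comp_injective (fun a b h => by omega)
  have hfo : Summable (fun k => f (2*k+1)) := hf.comp_injective (fun a b h => by omega)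
  have hge : Summable (fun k => g (2*k)) := hg.comp_injective (fun a b h => by omega)
  have hgo : Summable (fun k => g (2*k+1)) := hg.comp_injective (fun a b h => by omega)
  have hg_even : ∀ k, g (2*k) = - f (2*k) := by
    intro k
    have h1 : ((-1:ℝ))^(2*k+1) = -1 := by rw [pow_succ, pow_mul]; norm_num
    simp only [hgdef, hfdef, h1]
    ring
  have hg_odd : ∀ k, g (2*k+1) = f (2*k+1) := by
    intro k
    have h1 : ((-1:ℝ))^(2*k+1+1) = 1 := by
      rw [show 2*k+1+1 = 2*(k+1) by ring, pow_mul]; norm_num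
    simp only [hgdef, hfdef, h1]
    ring
  set d : ℕ → ℝ := fun k => f (2*k+1) - f (2*k) with hddef
  have hd : Summable d := hfo.sub hfe
  have hAd : ∑' n, g n = ∑' k, d k := by
    rw [← tsum_even_add_odd hge hgo]
    rw [tsum_congr hg_even, tsum_congr hg_odd, tsum_neg]
    rw [hddef, Summable.tsum_sub hfo hfe]
    ring
  have hdabs : Summable fun k => |d k| := hd.abs
  have habs : |∑' k, d k| ≤ ∑' k, |d k| := by
    simpa [Real.norm_eq_abs] using norm_tsum_le_tsum_norm (f := d) (by simpa [Real.norm_eq_abs] using hdabs)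
  -- bound the shifted terms
  have hshift : ∀ k : ℕ, |d (k+1)| ≤ (25 * t ^ (-(5/4):ℝ)) * ((k+1:ℕ):ℝ) ^ (-(3/2):ℝ) := by
    intro k
    have hK : (1:ℝ) ≤ ((k+1:ℕ):ℝ) := by exact_mod_cast Nat.one_le_iff_ne_zero.2 (Nat.succ_ne_zero k)
    have h1 := tun_diff_bound t ht hK
    have h2 := tun_poly_exp_bound t ht hK
    have hcast : d (k+1) = (2*((k+1:ℕ):ℝ)+1)^2 * Real.exp (-t*(2*((k+1:ℕ):ℝ)+1)^2)
        - (2*((k+1:ℕ):ℝ))^2 * Real.exp (-t*(2*((k+1:ℕ):ℝ))^2) := by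
      simp only [hddef, hfdef]
      push_cast
      ring_nf
    rw [hcast]
    calc |(2*((k+1:ℕ):ℝ)+1)^2 * Real.exp (-t*(2*((k+1:ℕ):ℝ)+1)^2)
        - (2*((k+1:ℕ):ℝ))^2 * Real.exp (-t*(2*((k+1:ℕ):ℝ))^2)| ≤ 5*((k+1:ℕ):ℝ)*Real.exp (-(t*((k+1:ℕ):ℝ)^2))
          + 20*t*((k+1:ℕ):ℝ)^3*Real.exp (-(t*((k+1:ℕ):ℝ)^2)) := h1
      _ ≤ 25 * t^(-(5/4):ℝ) * ((k+1:ℕ):ℝ)^(-(3/2):ℝ) := h2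
      _ = (25 * t^(-(5/4):ℝ)) * ((k+1:ℕ):ℝ)^(-(3/2):ℝ) := by ring
  have hcsum : Summable (fun k : ℕ => (25 * t ^ (-(5/4):ℝ)) * ((k:ℕ):ℝ) ^ (-(3/2):ℝ)) :=
    tunZ_summable.mul_left _
  have hcsum' : Summable (fun k : ℕ => (25 * t ^ (-(5/4):ℝ)) * ((k+1:ℕ):ℝ) ^ (-(3/2):ℝ)) :=
    (summable_nat_add_iff 1).2 hcsum
  have hdabs' : Summable fun k => |d (k+1)| := (summable_nat_add_iff 1).2 hdabs
  have hsplit2 : ∑' k, |d k| = |d 0| + ∑' k, |d (k+1)| := Summable.tsum_eq_zero_add hdabs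
  have hd0 : |d 0| ≤ 1 := by
    have : d 0 = Real.exp (-t) := by
      simp [hddef, hfdef]
    rw [this, abs_of_nonneg (Real.exp_pos _).le]
    exact Real.exp_le_one_iff.2 (by linarith)
  have htail : ∑' k, |d (k+1)| ≤ 25 * t ^ (-(5/4):ℝ) * tunZ := by
    have h1 : ∑' k, |d (k+1)| ≤ ∑' k : ℕ, (25 * t ^ (-(5/4):ℝ)) * ((k+1:ℕ):ℝ) ^ (-(3/2):ℝ) :=
      Summable.tsum_le_tsum hshift hdabs' hcsum'
    have h2 : ∑' k : ℕ, (25 * t ^ (-(5/4):ℝ)) * ((k:ℕ):ℝ) ^ (-(3/2):ℝ)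
        = |(0:ℝ)| * 0 + ∑' k : ℕ, (25 * t ^ (-(5/4):ℝ)) * ((k+1:ℕ):ℝ) ^ (-(3/2):ℝ) := by
      rw [Summable.tsum_eq_zero_add hcsum]
      norm_num [Real.zero_rpow]
    have h3 : ∑' k : ℕ, (25 * t ^ (-(5/4):ℝ)) * ((k:ℕ):ℝ) ^ (-(3/2):ℝ)
        = 25 * t ^ (-(5/4):ℝ) * tunZ := by
      rw [tsum_mul_left]; rfl
    rw [← h3]
    rw [h2]
    simpa using h1
  have hp1 : (1:ℝ) ≤ t ^ (-(5/4):ℝ) :=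
    Real.one_le_rpow_of_pos_of_le_one_of_nonpos ht ht1 (by norm_num)
  have hZ := tunZ_nonneg
  calc |∑' n, g n| = |∑' k, d k| := by rw [hAd]
    _ ≤ ∑' k, |d k| := habs
    _ = |d 0| + ∑' k, |d (k+1)| := hsplit2
    _ ≤ 1 + 25 * t ^ (-(5/4):ℝ) * tunZ := by linarith [hd0, htail]
    _ ≤ (1 + 25*tunZ) * t ^ (-(5/4):ℝ) := by nlinarith

end TunnelingAux

open Real in
/-- The tunneling amplitude
`F(t) = (Σ_{n≥1}(−1)^{n+1}n²e^{−tn²})/(Σ_{n≥1}n²e^{−tn²})` tends to `0` in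
the semiclassical limit `t → 0⁺`; in particular the tunneling probability
`F(t)²` vanishes in this limit. -/
theorem tunneling_probability_tendsto_zero_semiclassical :
    let F : ℝ → ℝ := fun t =>
      (∑' n : ℕ, (-1 : ℝ) ^ (n + 1) * (n : ℝ) ^ 2 * Real.exp (-t * (n : ℝ) ^ 2)) /
        (∑' n : ℕ, (n : ℝ) ^ 2 * Real.exp (-t * (n : ℝ) ^ 2))
    Tendsto F (nhdsWithin 0 (Set.Ioi 0)) (nhds 0) ∧
    Tendsto (fun t => (F t) ^ 2) (nhdsWithin 0 (Set.Ioi 0)) (nhds 0) := by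
  intro F
  set C : ℝ := 1 + 25*tunZ with hCdef
  have hC : 0 < C := by have := tunZ_nonneg; simp only [hCdef]; linarith
  have hbound : ∀ t ∈ Set.Ioo (0:ℝ) 1, ‖F t‖ ≤ 72*C*t^((1/4):ℝ) := by
    rintro t ⟨ht, ht1⟩
    have ht1' : t ≤ 1 := ht1.le
    have hBlb := tun_denom_lb t ht ht1'
    have hdpos : 0 < t ^ (-(3/2):ℝ) / 72 := by positivity
    have hBpos : 0 < ∑' n : ℕ, (n : ℝ) ^ 2 * Real.exp (-t * (n : ℝ) ^ 2) :=
      lt_of_lt_of_le hdpos hBlb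
    have hA := tun_num_ub t ht ht1'
    have hF : ‖F t‖ = |∑' n : ℕ, (-1:ℝ)^(n+1) * (n:ℝ)^2 * Real.exp (-t*(n:ℝ)^2)|
        / (∑' n : ℕ, (n : ℝ) ^ 2 * Real.exp (-t * (n : ℝ) ^ 2)) := by
      simp only [F, Real.norm_eq_abs, abs_div, abs_of_pos hBpos]
    rw [hF]
    have hstep : |∑' n : ℕ, (-1:ℝ)^(n+1) * (n:ℝ)^2 * Real.exp (-t*(n:ℝ)^2)|
        / (∑' n : ℕ, (n : ℝ) ^ 2 * Real.exp (-t * (n : ℝ) ^ 2))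
        ≤ (C * t ^ (-(5/4):ℝ)) / (t ^ (-(3/2):ℝ) / 72) :=
      div_le_div₀ (by positivity) (by rw [hCdef] at *; exact hA) hdpos hBlb
    refine le_trans hstep (le_of_eq ?_)
    have hne : t ^ (-(3/2):ℝ) ≠ 0 := (Real.rpow_pos_of_pos ht _).ne'
    have h14 : t^((1/4):ℝ) = t^(-(5/4):ℝ)/t^(-(3/2):ℝ) := by
      rw [← Real.rpow_sub ht]; norm_num
    rw [h14]
    field_simp
  have hmem : Set.Ioo (0:ℝ) 1 ∈ nhdsWithin 0 (Set.Ioi 0) :=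
    Ioo_mem_nhdsGT_of_mem (by norm_num : (0:ℝ) ∈ Set.Ico 0 1)
  have hg : Tendsto (fun t : ℝ => 72*C*t^((1/4):ℝ)) (nhdsWithin 0 (Set.Ioi 0)) (nhds 0) := by
    have h1 : Tendsto (fun t : ℝ => t^((1/4):ℝ)) (nhds 0) (nhds 0) := by
      have := (Real.continuousAt_rpow_const 0 (1/4) (Or.inr (by norm_num))).tendsto
      simpa [Real.zero_rpow (by norm_num : (1/4:ℝ) ≠ 0)] using this
    have h2 : Tendsto (fun t : ℝ => 72*C*t^((1/4):ℝ)) (nhdsWithin 0 (Set.Ioi 0)) (nhds (72*C*0)) :=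
      (h1.const_mul (72*C)).mono_left nhdsWithin_le_nhds
    simpa using h2
  have h1 : Tendsto F (nhdsWithin 0 (Set.Ioi 0)) (nhds 0) := by
    apply squeeze_zero_norm' _ hg
    filter_upwards [hmem] with t ht using hbound t ht
  exact ⟨h1, by simpa [sq] using h1.mul h1⟩
end

section
/- Let A be a commutative ℝ-algebra equipped with an ℝ-bilinear bracket {·,·} : A × A → A that is antisymmetric, satisfies the Jacobi identity, and satisfies the Leibniz rule {a, bc} = {a,b}·c + b·{a,c} (a Poisson algebra). Then there exists an ℝ-bilinear bracket [·,·] on the A-module Ω_{A/ℝ} of Kähler differentials such that: (1) [a·du, b·dv] = a{u,b}·dv + b{a,v}·du + ab·d{u,v} for all a, b, u, v ∈ A; (2) [·,·] satisfies the Jacobi identity, making Ω_{A/ℝ} a Lie algebra over ℝ; (3) with π♯ : Ω_{A/ℝ} → Der(A) the A-linear map determined by π♯(du) = {u,·}, one has [α, a·β] = π♯(α)(a)·β + a·[α,β] for all α, β ∈ Ω_{A/ℝ} and a ∈ A; and (4) π♯([α,β]) = [π♯(α), π♯(β)] as derivations of A. -/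
open KaehlerDifferential Finsupp

namespace PoissonLRAux

section

variable {A : Type*} [CommRing A] [Algebra ℝ A]

local notation "Ω" => KaehlerDifferential ℝ A
local notation "dd" => KaehlerDifferential.D ℝ A
local notation "tot" => Finsupp.linearCombination A (KaehlerDifferential.D ℝ A)

set_option synthInstance.maxHeartbeats 1000000 in
instance sCC : SMulCommClass ℝ A (KaehlerDifferential ℝ A) := inferInstance
set_option synthInstance.maxHeartbeats 1000000 in
instance sTow : IsScalarTower ℝ A (KaehlerDifferential ℝ A) := inferInstance
set_option synthInstance.maxHeartbeats 1000000 in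
instance sTowD : IsScalarTower ℝ A (Derivation ℝ A A) := inferInstance

variable (P : A →ₗ[ℝ] A →ₗ[ℝ] A)

/-- `b ↦ (a * P u b) • dv + (b * P a v) • du + (a*b) • d(P u v)`. -/
noncomputable def bK (u a v : A) : A →ₗ[ℝ] Ω :=
  (((LinearMap.mulLeft ℝ a).comp (P u)).smulRight (dd v))
  + ((LinearMap.mulRight ℝ (P a v)).smulRight (dd u))
  + ((LinearMap.mulLeft ℝ a).smulRight (dd (P u v)))

lemma bK_apply (u a v b : A) :
    bK P u a v b = (a * P u b) • dd v + (b * P a v) • dd u + (a * b) • dd (P u v) := rfl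

noncomputable def bOuter (u : A) : A →ₗ[ℝ] ((A →₀ A) →ₗ[ℝ] Ω) where
  toFun a := Finsupp.lsum ℝ (fun v => bK P u a v)
  map_add' a₁ a₂ := by
    ext v b
    simp [bK_apply, add_mul, mul_add, add_smul, map_add]
    abel
  map_smul' r a := by
    ext v b
    simp [bK_apply, smul_mul_assoc, mul_smul_comm, map_smul, smul_add, smul_smul]

noncomputable def BB : (A →₀ A) →ₗ[ℝ] (A →₀ A) →ₗ[ℝ] Ω :=
  Finsupp.lsum ℝ (fun u => bOuter P u)

lemma BB_single (u a v b : A) :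
    BB P (single u a) (single v b)
      = (a * P u b) • dd v + (b * P a v) • dd u + (a * b) • dd (P u v) := by
  simp [BB, bOuter, bK_apply]

lemma P_one_right (hleibniz : ∀ a b c : A, P a (b * c) = P a b * c + b * P a c) (u : A) :
    P u 1 = 0 := by
  have h := hleibniz u 1 1
  simp only [mul_one, one_mul] at h
  exact (right_eq_add.mp h)

lemma P_one_left (hanti : ∀ a b : A, P a b = -P b a)
    (hleibniz : ∀ a b c : A, P a (b * c) = P a b * c + b * P a c) (u : A) : P 1 u = 0 := by
  rw [hanti, P_one_right P hleibniz, neg_zero]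

lemma P_algebraMap (hleibniz : ∀ a b c : A, P a (b * c) = P a b * c + b * P a c)
    (a : A) (r : ℝ) : P a (algebraMap ℝ A r) = 0 := by
  rw [Algebra.algebraMap_eq_smul_one, map_smul, P_one_right P hleibniz, smul_zero]

lemma BB_skew (hanti : ∀ a b : A, P a b = -P b a) (ξ η : A →₀ A) :
    BB P ξ η = - BB P η ξ := by
  induction ξ using Finsupp.induction_linear with
  | zero => simp
  | add f g hf hg => simp only [map_add, LinearMap.add_apply, hf, hg]; abel
  | single u a =>
    induction η using Finsupp.induction_linear with
    | zero => simp
    | add f g hf hg => simp only [map_add, LinearMap.add_apply, hf, hg]; abel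
    | single v b =>
      rw [BB_single, BB_single, hanti v a, hanti b u, hanti v u]
      simp only [map_neg, mul_neg, neg_mul, neg_smul, smul_neg, neg_neg, neg_add]
      rw [mul_comm b a]
      abel

lemma BB_smul_tot (hleibniz : ∀ a b c : A, P a (b * c) = P a b * c + b * P a c)
    (u a c : A) (η : A →₀ A) :
    BB P (single u a) (c • η)
      = c • BB P (single u a) η + (a * P u c) • tot η := by
  induction η using Finsupp.induction_linear with
  | zero => simp
  | add f g hf hg =>
    simp only [smul_add, map_add, hf, hg]
    abel
  | single v b =>
    rw [Finsupp.smul_single, smul_eq_mul, BB_single, BB_single,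
      Finsupp.linearCombination_single, hleibniz u c b]
    simp only [smul_add, smul_smul]
    module

lemma BB_ker (hleibniz : ∀ a b c : A, P a (b * c) = P a b * c + b * P a c)
    (η : A →₀ A) (hη : η ∈ kerTotal ℝ A) :
    (∀ u a : A, BB P (single u a) η = 0) ∧ tot η = 0 := by
  induction hη using Submodule.span_induction with
  | mem x hx =>
    obtain ((⟨⟨x, y⟩, rfl⟩ | ⟨⟨x, y⟩, rfl⟩) | ⟨r, rfl⟩) := hx
    · constructor
      · intro u a
        simp only [map_add, map_sub, LinearMap.add_apply, LinearMap.sub_apply, BB_single,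
          P_one_right P hleibniz, mul_zero, zero_smul, one_mul, mul_one, map_add P]
        simp only [LinearMap.add_apply, map_add, add_smul, smul_add]
        abel
      · simp [map_add]
    · constructor
      · intro u a
        simp only [map_add, map_sub, LinearMap.add_apply, LinearMap.sub_apply, BB_single,
          P_one_right P hleibniz, mul_zero, zero_smul, one_mul, mul_one,
          hleibniz, Derivation.leibniz, map_add]
        simp only [smul_add, smul_smul, add_smul]
        module
      · simp only [map_sub, map_add, Finsupp.linearCombination_single, Derivation.leibniz,
          one_smul]
        abel
    · constructor
      · intro u a
        simp [BB_single, P_one_right P hleibniz, P_algebraMap P hleibniz]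
      · simp
  | zero => exact ⟨fun u a => by simp, by simp⟩
  | add x y hx hy ihx ihy =>
    exact ⟨fun u a => by simp [map_add, ihx.1 u a, ihy.1 u a],
      by simp [map_add, ihx.2, ihy.2]⟩
  | smul c x hx ih =>
    refine ⟨fun u a => ?_, by simp [map_smul, ih.2]⟩
    rw [BB_smul_tot P hleibniz, ih.1 u a, ih.2, smul_zero, smul_zero, add_zero]

variable {M : Type*} [AddCommGroup M] [Module ℝ M]

noncomputable def descend (f : (A →₀ A) →ₗ[ℝ] M) (h : ∀ ξ ∈ kerTotal ℝ A, f ξ = 0) :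
    Ω →ₗ[ℝ] M :=
  (Submodule.liftQ ((kerTotal ℝ A).restrictScalars ℝ) f
      (fun ξ hξ => LinearMap.mem_ker.mpr (h ξ hξ))).comp
    (((Submodule.Quotient.restrictScalarsEquiv ℝ (kerTotal ℝ A)).symm.toLinearMap).comp
      (((quotKerTotalEquiv ℝ A).symm.toLinearMap).restrictScalars ℝ))

lemma descend_tot (f : (A →₀ A) →ₗ[ℝ] M) (h : ∀ ξ ∈ kerTotal ℝ A, f ξ = 0) (ξ : A →₀ A) :
    descend f h (tot ξ) = f ξ := by
  have h1 : (quotKerTotalEquiv ℝ A).symm (tot ξ) = Submodule.Quotient.mk ξ := by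
    rw [LinearEquiv.symm_apply_eq]
    rfl
  simp [descend, h1, Submodule.Quotient.restrictScalarsEquiv_symm_mk]

lemma BB_ker_right (hleibniz : ∀ a b c : A, P a (b * c) = P a b * c + b * P a c)
    (ξ η : A →₀ A) (hη : η ∈ kerTotal ℝ A) : BB P ξ η = 0 := by
  induction ξ using Finsupp.induction_linear with
  | zero => simp
  | add f g hf hg => simp [map_add, hf, hg]
  | single u a => exact (BB_ker P hleibniz η hη).1 u a

lemma BB_ker_left (hanti : ∀ a b : A, P a b = -P b a)
    (hleibniz : ∀ a b c : A, P a (b * c) = P a b * c + b * P a c)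
    (ξ η : A →₀ A) (hξ : ξ ∈ kerTotal ℝ A) : BB P ξ η = 0 := by
  rw [BB_skew P hanti, BB_ker_right P hleibniz η ξ hξ, neg_zero]

noncomputable def brF (hleibniz : ∀ a b c : A, P a (b * c) = P a b * c + b * P a c) :
    (A →₀ A) →ₗ[ℝ] (Ω →ₗ[ℝ] Ω) where
  toFun ξ := descend (BB P ξ) (fun η hη => BB_ker_right P hleibniz ξ η hη)
  map_add' ξ ξ' := by
    apply LinearMap.ext; intro ω
    obtain ⟨η, rfl⟩ := KaehlerDifferential.linearCombination_surjective ℝ A ω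
    simp [descend_tot, map_add]
  map_smul' r ξ := by
    apply LinearMap.ext; intro ω
    obtain ⟨η, rfl⟩ := KaehlerDifferential.linearCombination_surjective ℝ A ω
    simp [descend_tot, map_smul]

noncomputable def brL (hanti : ∀ a b : A, P a b = -P b a)
    (hleibniz : ∀ a b c : A, P a (b * c) = P a b * c + b * P a c) :
    Ω →ₗ[ℝ] Ω →ₗ[ℝ] Ω :=
  descend (brF P hleibniz) (fun ξ hξ => by
    apply LinearMap.ext; intro ω
    obtain ⟨η, rfl⟩ := KaehlerDifferential.linearCombination_surjective ℝ A ω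
    simp only [brF, LinearMap.coe_mk, AddHom.coe_mk, descend_tot, LinearMap.zero_apply]
    exact BB_ker_left P hanti hleibniz ξ η hξ)

variable (hanti : ∀ a b : A, P a b = -P b a)
variable (hjacobi : ∀ a b c : A, P a (P b c) + P b (P c a) + P c (P a b) = 0)
variable (hleibniz : ∀ a b c : A, P a (b * c) = P a b * c + b * P a c)

include hanti hleibniz in
lemma brL_tot (ξ η : A →₀ A) :
    brL P hanti hleibniz (tot ξ) (tot η) = BB P ξ η := by
  simp [brL, descend_tot, brF]

include hanti hleibniz in
lemma brL_smulD (u a v b : A) :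
    brL P hanti hleibniz (a • dd u) (b • dd v)
      = (a * P u b) • dd v + (b * P a v) • dd u + (a * b) • dd (P u v) := by
  have e1 : a • dd u = tot (single u a) := by simp
  have e2 : b • dd v = tot (single v b) := by simp
  rw [e1, e2, brL_tot, BB_single]

include hanti hleibniz in
lemma brL_skew (α β : Ω) : brL P hanti hleibniz α β = - brL P hanti hleibniz β α := by
  obtain ⟨ξ, rfl⟩ := KaehlerDifferential.linearCombination_surjective ℝ A α
  obtain ⟨η, rfl⟩ := KaehlerDifferential.linearCombination_surjective ℝ A β
  rw [brL_tot, brL_tot, BB_skew P hanti]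

noncomputable def Pder (a : A) : Derivation ℝ A A where
  toLinearMap := P a
  map_one_eq_zero' := P_one_right P hleibniz a
  leibniz' b c := by
    rw [hleibniz a b c, smul_eq_mul, smul_eq_mul]; ring

@[simp] lemma Pder_apply (a b : A) : Pder P hleibniz a b = P a b := rfl

noncomputable def DPder : Derivation ℝ A (Derivation ℝ A A) where
  toFun a := Pder P hleibniz a
  map_add' a b := by ext c; simp [map_add]
  map_smul' r a := by ext c; simp [map_smul]
  map_one_eq_zero' := by
    ext c
    simp only [LinearMap.coe_mk, AddHom.coe_mk, Pder_apply, Derivation.coe_zero, Pi.zero_apply]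
    rw [hanti, P_one_right P hleibniz, neg_zero]
  leibniz' a b := by
    ext c
    simp only [LinearMap.coe_mk, AddHom.coe_mk, Pder_apply, Derivation.coe_add, Pi.add_apply,
      Derivation.coe_smul, Pi.smul_apply, smul_eq_mul]
    rw [hanti (a*b) c, hleibniz c a b, hanti c a, hanti c b]
    ring

noncomputable def pish : Ω →ₗ[A] Derivation ℝ A A :=
  (DPder P hanti hleibniz).liftKaehlerDifferential

@[simp] lemma pish_D (u : A) :
    pish P hanti hleibniz (dd u) = Pder P hleibniz u :=
  Derivation.liftKaehlerDifferential_comp_D _ _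

include hanti hleibniz in
lemma pish_D_apply (u a : A) : pish P hanti hleibniz (dd u) a = P u a := by simp

include hanti hleibniz in
lemma pish_smulD (a u c : A) : pish P hanti hleibniz (a • dd u) c = a * P u c := by
  rw [map_smul]
  simp

end

section SpanInd

variable {A : Type*} [CommRing A] [Algebra ℝ A]

def Sgen : Set (KaehlerDifferential ℝ A) :=
  Set.range (fun p : A × A => p.1 • KaehlerDifferential.D ℝ A p.2)

lemma smul_mem_spanS (x : KaehlerDifferential ℝ A)
    (hx : x ∈ Submodule.span ℝ (Sgen (A := A))) (a : A) :
    a • x ∈ Submodule.span ℝ (Sgen (A := A)) := by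
  induction hx using Submodule.span_induction with
  | mem y hy =>
    obtain ⟨⟨b, u⟩, rfl⟩ := hy
    apply Submodule.subset_span
    exact ⟨⟨a * b, u⟩, by simp [mul_smul]⟩
  | zero => simp
  | add y z hy hz ihy ihz => rw [smul_add]; exact Submodule.add_mem _ ihy ihz
  | smul r y hy ihy => rw [smul_comm]; exact Submodule.smul_mem _ r ihy

lemma span_Sgen : Submodule.span ℝ (Sgen (A := A)) = ⊤ := by
  rw [eq_top_iff]
  intro x hxt
  clear hxt
  have hx : x ∈ Submodule.span A (Set.range (KaehlerDifferential.D ℝ A)) := by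
    rw [KaehlerDifferential.span_range_derivation]; trivial
  induction hx using Submodule.span_induction with
  | mem y hy =>
    obtain ⟨u, rfl⟩ := hy
    exact Submodule.subset_span ⟨⟨1, u⟩, by simp⟩
  | zero => simp
  | add y z hy hz ihy ihz => exact Submodule.add_mem _ ihy ihz
  | smul a y hy ihy => exact smul_mem_spanS y ihy a

/-- Induction principle on `Ω`. -/
lemma omega_induction {p : KaehlerDifferential ℝ A → Prop} (h0 : p 0)
    (hadd : ∀ x y, p x → p y → p (x + y))
    (hsmul : ∀ (r : ℝ) x, p x → p (r • x))
    (hgen : ∀ (a u : A), p (a • KaehlerDifferential.D ℝ A u)) : ∀ x, p x := by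
  intro x
  have hx : x ∈ Submodule.span ℝ (Sgen (A := A)) := by rw [span_Sgen]; trivial
  induction hx using Submodule.span_induction with
  | mem y hy => obtain ⟨⟨a, u⟩, rfl⟩ := hy; exact hgen a u
  | zero => exact h0
  | add y z hy hz ihy ihz => exact hadd y z ihy ihz
  | smul r y hy ihy => exact hsmul r y ihy

end SpanInd



section Props

variable {A : Type*} [CommRing A] [Algebra ℝ A]

local notation "Ω" => KaehlerDifferential ℝ A
local notation "dd" => KaehlerDifferential.D ℝ A

variable (P : A →ₗ[ℝ] A →ₗ[ℝ] A)
variable (hanti : ∀ a b : A, P a b = -P b a)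
variable (hjacobi : ∀ a b c : A, P a (P b c) + P b (P c a) + P c (P a b) = 0)
variable (hleibniz : ∀ a b c : A, P a (b * c) = P a b * c + b * P a c)

include hanti hleibniz in
lemma leib_gen (c u : A) : ∀ β, ∀ a : A,
    brL P hanti hleibniz (c • dd u) (a • β) = pish P hanti hleibniz (c • dd u) a • β + a • brL P hanti hleibniz (c • dd u) β := by
  refine omega_induction ?_ ?_ ?_ ?_
  · intro a; simp
  · intro x y hx hy a
    rw [smul_add, map_add, hx a, hy a, map_add, smul_add, smul_add]
    abel
  · intro r x hx a
    rw [smul_comm a r, (brL P hanti hleibniz (c • dd u)).map_smul r (a • x), hx a,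
      (brL P hanti hleibniz (c • dd u)).map_smul r x]
    rw [smul_add r (pish P hanti hleibniz (c • dd u) a • x) (a • brL P hanti hleibniz (c • dd u) x)]
    rw [smul_comm r (pish P hanti hleibniz (c • dd u) a) x, smul_comm r a ((brL P hanti hleibniz (c • dd u)) x)]
  · intro b v a
    rw [smul_smul, brL_smulD P hanti hleibniz, brL_smulD P hanti hleibniz, pish_smulD P hanti hleibniz, hleibniz u a b]
    simp only [smul_add, smul_smul]
    module

include hanti hleibniz in
lemma leib_all : ∀ α β : Ω, ∀ a : A,
    brL P hanti hleibniz α (a • β) = pish P hanti hleibniz α a • β + a • brL P hanti hleibniz α β := by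
  refine omega_induction ?_ ?_ ?_ ?_
  · intro β a; simp
  · intro x y hx hy β a
    rw [map_add, LinearMap.add_apply, hx β a, hy β a, map_add, Derivation.add_apply,
      add_smul, LinearMap.add_apply, smul_add]
    abel
  · intro r x hx β a
    rw [(brL P hanti hleibniz).map_smul r x, LinearMap.smul_apply, LinearMap.smul_apply,
      hx β a, LinearMap.map_smul_of_tower (pish P hanti hleibniz) r x, Derivation.smul_apply,
      smul_add r (pish P hanti hleibniz x a • β) (a • brL P hanti hleibniz x β),
      smul_assoc r (pish P hanti hleibniz x a) β, smul_comm r a (brL P hanti hleibniz x β)]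
  · intro c u β a; exact leib_gen P hanti hleibniz c u β a

include hanti hjacobi hleibniz in
lemma anchor_all : ∀ α β : Ω, pish P hanti hleibniz (brL P hanti hleibniz α β) = ⁅pish P hanti hleibniz α, pish P hanti hleibniz β⁆ := by
  refine omega_induction ?_ ?_ ?_ ?_
  · intro β; simp
  · intro x y hx hy β
    rw [map_add, LinearMap.add_apply, map_add, hx β, hy β, map_add, add_lie]
  · intro r x hx β
    rw [(brL P hanti hleibniz).map_smul r x, LinearMap.smul_apply, LinearMap.map_smul_of_tower (pish P hanti hleibniz),
      LinearMap.map_smul_of_tower (pish P hanti hleibniz) r x, hx β, smul_lie]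
  · intro a u
    refine omega_induction ?_ ?_ ?_ ?_
    · simp
    · intro x y hx hy
      rw [map_add, map_add, hx, hy, map_add, lie_add]
    · intro r x hx
      rw [(brL P hanti hleibniz (a • dd u)).map_smul r x, LinearMap.map_smul_of_tower (pish P hanti hleibniz),
        LinearMap.map_smul_of_tower (pish P hanti hleibniz) r x, hx, lie_smul]
    · intro b v
      ext c
      rw [brL_smulD P hanti hleibniz, map_add, map_add, Derivation.add_apply, Derivation.add_apply,
        Derivation.commutator_apply]
      simp only [pish_smulD P hanti hleibniz]
      rw [hleibniz u b (P v c), hleibniz v a (P u c)]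
      have hj := hjacobi u v c
      rw [hanti c u, map_neg, hanti c (P u v)] at hj
      linear_combination (b * P u c) * hanti a v - (a*b) * hj


include hanti hleibniz in
lemma brL_DD (x y : A) : brL P hanti hleibniz (dd x) (dd y) = dd (P x y) := by
  have e := brL_smulD P hanti hleibniz x 1 y 1
  rw [one_smul, one_smul] at e
  rw [e, P_one_right P hleibniz, P_one_left P hanti hleibniz]
  simp

local notation "J" => fun (α β γ : Ω) =>
  brL P hanti hleibniz α (brL P hanti hleibniz β γ) + brL P hanti hleibniz β (brL P hanti hleibniz γ α) + brL P hanti hleibniz γ (brL P hanti hleibniz α β)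

lemma jac_cyc (α β γ : Ω) : J α β γ = J γ α β := by abel

lemma jac_add3 (α β x y : Ω) : J α β (x + y) = J α β x + J α β y := by
  simp only [map_add, LinearMap.add_apply]
  abel

lemma jac_smulr3 (α β γ : Ω) (r : ℝ) : J α β (r • γ) = r • (J α β γ) := by
  simp only [map_smul, LinearMap.smul_apply]
  rw [smul_add r (brL P hanti hleibniz α (brL P hanti hleibniz β γ) + brL P hanti hleibniz β (brL P hanti hleibniz γ α)) (brL P hanti hleibniz γ (brL P hanti hleibniz α β)),
    smul_add r (brL P hanti hleibniz α (brL P hanti hleibniz β γ)) (brL P hanti hleibniz β (brL P hanti hleibniz γ α))]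

lemma jac_zero3 (α β : Ω) : J α β 0 = 0 := by simp

include hanti hjacobi hleibniz in
lemma jac_smulA (α β γ : Ω) (a : A) : J α β (a • γ) = a • (J α β γ) := by
  beta_reduce
  rw [brL_skew P hanti hleibniz (a • γ) α, map_neg, brL_skew P hanti hleibniz (a • γ) (brL P hanti hleibniz α β),
      brL_skew P hanti hleibniz γ α, map_neg (brL P hanti hleibniz β), brL_skew P hanti hleibniz γ (brL P hanti hleibniz α β),
      leib_all P hanti hleibniz β γ a, map_add,
      leib_all P hanti hleibniz α γ (pish P hanti hleibniz β a),
      leib_all P hanti hleibniz α (brL P hanti hleibniz β γ) a,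
      leib_all P hanti hleibniz α γ a, map_add,
      leib_all P hanti hleibniz β γ (pish P hanti hleibniz α a),
      leib_all P hanti hleibniz β (brL P hanti hleibniz α γ) a,
      leib_all P hanti hleibniz (brL P hanti hleibniz α β) γ a,
      anchor_all P hanti hjacobi hleibniz α β, Derivation.commutator_apply, sub_smul]
  simp only [smul_add, smul_neg, neg_add_rev, neg_neg]
  abel

include hanti hjacobi hleibniz in
lemma jac_D3 (u v w : A) : J (dd u) (dd v) (dd w) = 0 := by
  beta_reduce
  rw [brL_DD P hanti hleibniz, brL_DD P hanti hleibniz, brL_DD P hanti hleibniz,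
    brL_DD P hanti hleibniz, brL_DD P hanti hleibniz, brL_DD P hanti hleibniz,
    ← map_add, ← map_add, hjacobi u v w, map_zero]

include hanti hjacobi hleibniz in
lemma jac_all (α β γ : Ω) : J α β γ = 0 := by
  have H1 : ∀ (u v : A) (α : Ω), J (dd u) (dd v) α = 0 := by
    intro u v
    refine omega_induction ?_ ?_ ?_ ?_
    · exact jac_zero3 P hanti hleibniz _ _
    · intro x y hx hy; rw [jac_add3, hx, hy, add_zero]
    · intro r x hx; rw [jac_smulr3, hx, smul_zero]
    · intro a w
      rw [jac_smulA P hanti hjacobi hleibniz, jac_D3 P hanti hjacobi hleibniz, smul_zero]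
  have H2 : ∀ (u : A) (α β : Ω), J (dd u) α β = 0 := by
    intro u α
    refine omega_induction ?_ ?_ ?_ ?_
    · exact jac_zero3 P hanti hleibniz _ _
    · intro x y hx hy; rw [jac_add3, hx, hy, add_zero]
    · intro r x hx; rw [jac_smulr3, hx, smul_zero]
    · intro b v
      rw [jac_smulA P hanti hjacobi hleibniz, jac_cyc, H1, smul_zero]
  induction γ using omega_induction with
  | h0 => exact jac_zero3 P hanti hleibniz _ _
  | hadd x y hx hy => rw [jac_add3, hx, hy, add_zero]
  | hsmul r x hx => rw [jac_smulr3, hx, smul_zero]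
  | hgen c w => rw [jac_smulA P hanti hjacobi hleibniz, jac_cyc, H2, smul_zero]

end Props

end PoissonLRAux

/-- The Lie–Rinehart algebra associated with a Poisson algebra: given a
Poisson bracket `{·,·} = P` on a commutative `ℝ`-algebra `A`, the module of
Kähler differentials `Ω_{A/ℝ}` carries an `ℝ`-bilinear Lie bracket with
`[a du, b dv] = a{u,b}dv + b{a,v}du + ab d{u,v}`, for which the anchor
`π♯ : Ω_{A/ℝ} → Der(A)`, `π♯(du) = {u,·}`, satisfies the Leibniz rule
`[α, aβ] = π♯(α)(a)β + a[α,β]` and is a morphism of Lie algebras. -/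
theorem poisson_lie_rinehart (A : Type*) [CommRing A] [Algebra ℝ A]
    (P : A →ₗ[ℝ] A →ₗ[ℝ] A)
    (hanti : ∀ a b : A, P a b = -P b a)
    (hjacobi : ∀ a b c : A, P a (P b c) + P b (P c a) + P c (P a b) = 0)
    (hleibniz : ∀ a b c : A, P a (b * c) = P a b * c + b * P a c) :
    ∃ pish : KaehlerDifferential ℝ A →ₗ[A] Derivation ℝ A A,
      (∀ u a : A, pish (KaehlerDifferential.D ℝ A u) a = P u a) ∧
      ∃ br : KaehlerDifferential ℝ A →ₗ[ℝ]
              KaehlerDifferential ℝ A →ₗ[ℝ] KaehlerDifferential ℝ A,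
        (∀ a b u v : A,
          br (a • KaehlerDifferential.D ℝ A u) (b • KaehlerDifferential.D ℝ A v)
            = (a * P u b) • KaehlerDifferential.D ℝ A v
              + (b * P a v) • KaehlerDifferential.D ℝ A u
              + (a * b) • KaehlerDifferential.D ℝ A (P u v)) ∧
        (∀ α β γ : KaehlerDifferential ℝ A,
          br α (br β γ) + br β (br γ α) + br γ (br α β) = 0) ∧
        (∀ (α β : KaehlerDifferential ℝ A) (a : A),
          br α (a • β) = pish α a • β + a • br α β) ∧
        (∀ α β : KaehlerDifferential ℝ A, pish (br α β) = ⁅pish α, pish β⁆) := by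
  classical
  refine ⟨PoissonLRAux.pish P hanti hleibniz,
    PoissonLRAux.pish_D_apply P hanti hleibniz,
    PoissonLRAux.brL P hanti hleibniz,
    fun a b u v => PoissonLRAux.brL_smulD P hanti hleibniz u a v b,
    fun α β γ => PoissonLRAux.jac_all P hanti hjacobi hleibniz α β γ,
    fun α β a => PoissonLRAux.leib_all P hanti hleibniz α β a,
    fun α β => PoissonLRAux.anchor_all P hanti hjacobi hleibniz α β⟩
end
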